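/- arXiv:1705.00146 — 7 statements merged into one kernel-verified Lean document; each statement's English description precedes it below -/
import Mathlib

section
/- Let N ∈ ℕ, Γ₁,…,Γ_N be real numbers, P_K : (0,∞) → ℝ a continuous function, and let X₁,…,X_N be a solution of the EP-PV system on an interval J ⊆ ℝ. Then the map t ↦ Σ_{n=1}^N Γ_n |X_n(t)|² (the angular impulse I) is constant on J. -/
open scoped BigOperators

/-- The perpendicular `(v₁, v₂)^⊥ = (v₂, −v₁)` of a vector in ℝ². -/
noncomputable def perp (v : EuclideanSpace ℝ (Fin 2)) : EuclideanSpace ℝ (Fin 2) :=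
  (WithLp.equiv 2 (Fin 2 → ℝ)).symm ![v 1, -v 0]

/-- The right-hand side of the (scaled) Euler–Poincaré point-vortex system for the
`n`-th vortex, given the current positions `X`. -/
noncomputable def eppvRHS {N : ℕ} (Γ : Fin N → ℝ) (P_K : ℝ → ℝ)
    (X : Fin N → EuclideanSpace ℝ (Fin 2)) (n : Fin N) : EuclideanSpace ℝ (Fin 2) :=
  (-(1 / (2 * Real.pi))) • ∑ m ∈ Finset.univ.filter (fun m => m ≠ n),
    ((Γ m * P_K ‖X n - X m‖) / ‖X n - X m‖ ^ 2) • perp (X n - X m)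

/-- `X : Fin N → ℝ → ℝ²` is a solution of the EP-PV system on `J ⊆ ℝ`:
the vortices stay pairwise distinct on `J` and each curve is differentiable on `J`
with derivative given by the EP-PV vector field. -/
def IsEPPVSolution {N : ℕ} (Γ : Fin N → ℝ) (P_K : ℝ → ℝ) (J : Set ℝ)
    (X : Fin N → ℝ → EuclideanSpace ℝ (Fin 2)) : Prop :=
  (∀ m n : Fin N, m ≠ n → ∀ t ∈ J, X m t ≠ X n t) ∧
  (∀ n : Fin N, ∀ t ∈ J,
    HasDerivWithinAt (X n) (eppvRHS Γ P_K (fun m => X m t) n) J t)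

open scoped RealInnerProductSpace

lemma inner_perp (u v : EuclideanSpace ℝ (Fin 2)) :
    ⟪u, perp v⟫ = u 0 * v 1 - u 1 * v 0 := by
  simp [perp, PiLp.inner_apply, Fin.sum_univ_two]
  ring

lemma eppv_key {N : ℕ} (Γ : Fin N → ℝ) (P_K : ℝ → ℝ)
    (X : Fin N → EuclideanSpace ℝ (Fin 2)) :
    ∑ n : Fin N, Γ n * ⟪X n, eppvRHS Γ P_K X n⟫ = 0 := by
  set G : Fin N → Fin N → ℝ := fun n m =>
    if m ≠ n then
      -(1 / (2 * Real.pi)) * (Γ n * ((Γ m * P_K ‖X n - X m‖) / ‖X n - X m‖ ^ 2 *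
        ⟪X n, perp (X n - X m)⟫)) else 0 with hG
  have hS : ∑ n : Fin N, Γ n * ⟪X n, eppvRHS Γ P_K X n⟫
      = ∑ n : Fin N, ∑ m : Fin N, G n m := by
    refine Finset.sum_congr rfl fun n _ => ?_
    rw [eppvRHS, inner_smul_right, inner_sum]
    rw [Finset.sum_filter, Finset.mul_sum, Finset.mul_sum]
    refine Finset.sum_congr rfl fun m _ => ?_
    by_cases h : m ≠ n
    · simp only [hG, if_pos h, inner_smul_right]
      ring
    · simp only [hG, if_neg h, mul_zero]
  have hanti : ∀ n m, G n m = - G m n := by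
    intro n m
    by_cases h : m = n
    · subst h; simp [hG]
    · have h' : ¬ n = m := fun e => h e.symm
      simp only [hG, if_pos h, if_pos h', ne_eq, not_false_iff]
      have hnorm : ‖X m - X n‖ = ‖X n - X m‖ := norm_sub_rev _ _
      rw [hnorm, inner_perp, inner_perp]
      have h0 : (X n - X m) 0 = X n 0 - X m 0 := rfl
      have h1 : (X n - X m) 1 = X n 1 - X m 1 := rfl
      have h0' : (X m - X n) 0 = X m 0 - X n 0 := rfl
      have h1' : (X m - X n) 1 = X m 1 - X n 1 := rfl
      rw [h0, h1, h0', h1']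
      ring
  have : ∑ n : Fin N, ∑ m : Fin N, G n m = - ∑ n : Fin N, ∑ m : Fin N, G n m := by
    conv_lhs => rw [Finset.sum_comm]
    calc ∑ m : Fin N, ∑ n : Fin N, G n m
        = ∑ m : Fin N, ∑ n : Fin N, -G m n := by
          refine Finset.sum_congr rfl fun m _ => Finset.sum_congr rfl fun n _ => hanti n m
      _ = - ∑ n : Fin N, ∑ m : Fin N, G n m := by
          simp [Finset.sum_neg_distrib]
  have h0 : ∑ n : Fin N, ∑ m : Fin N, G n m = 0 := by linarith
  rw [hS, h0]

/-- Along any solution of the EP-PV system on an interval `J`,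
the angular impulse `Σ_n Γ_n |X_n(t)|²` is constant. -/
theorem eppv_angular_impulse_const {N : ℕ} (Γ : Fin N → ℝ) (P_K : ℝ → ℝ)
    (hPK : ContinuousOn P_K (Set.Ioi 0)) (J : Set ℝ) (hJ : Convex ℝ J)
    (X : Fin N → ℝ → EuclideanSpace ℝ (Fin 2))
    (hX : IsEPPVSolution Γ P_K J X) :
    ∀ s ∈ J, ∀ t ∈ J,
      ∑ n : Fin N, Γ n * ‖X n s‖ ^ 2 = ∑ n : Fin N, Γ n * ‖X n t‖ ^ 2 := by
  intro s hs t ht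
  set f : ℝ → ℝ := fun τ => ∑ n : Fin N, Γ n * ⟪X n τ, X n τ⟫ with hf
  have hderiv : ∀ τ ∈ J, HasDerivWithinAt f 0 J τ := by
    intro τ hτ
    have h1 : HasDerivWithinAt f
        (∑ n : Fin N, Γ n * (⟪X n τ, eppvRHS Γ P_K (fun m => X m τ) n⟫ +
          ⟪eppvRHS Γ P_K (fun m => X m τ) n, X n τ⟫)) J τ := by
      apply HasDerivWithinAt.fun_sum
      intro n _
      exact ((hX.2 n τ hτ).inner ℝ (hX.2 n τ hτ)).const_mul (Γ n)
    have h2 : (∑ n : Fin N, Γ n * (⟪X n τ, eppvRHS Γ P_K (fun m => X m τ) n⟫ +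
          ⟪eppvRHS Γ P_K (fun m => X m τ) n, X n τ⟫)) = 0 := by
      have := eppv_key Γ P_K (fun m => X m τ)
      calc (∑ n : Fin N, Γ n * (⟪X n τ, eppvRHS Γ P_K (fun m => X m τ) n⟫ +
          ⟪eppvRHS Γ P_K (fun m => X m τ) n, X n τ⟫))
          = 2 * ∑ n : Fin N, Γ n * ⟪X n τ, eppvRHS Γ P_K (fun m => X m τ) n⟫ := by
            rw [Finset.mul_sum]
            refine Finset.sum_congr rfl fun n _ => ?_
            rw [real_inner_comm (eppvRHS Γ P_K (fun m => X m τ) n) (X n τ)]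
            ring
        _ = 0 := by rw [this]; ring
    rwa [h2] at h1
  have hle : ‖f s - f t‖ ≤ 0 * ‖s - t‖ :=
    hJ.norm_image_sub_le_of_norm_hasDerivWithin_le (f' := fun _ => 0) hderiv
      (fun x _ => by simp) ht hs
  have heq : f s = f t := by
    rw [zero_mul] at hle
    have := norm_nonneg (f s - f t)
    have : ‖f s - f t‖ = 0 := le_antisymm hle this
    have := norm_eq_zero.mp this
    linarith [sub_eq_zero.mp this]
  have hrw : ∀ τ, f τ = ∑ n : Fin N, Γ n * ‖X n τ‖ ^ 2 := by
    intro τ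
    refine Finset.sum_congr rfl fun n _ => ?_
    rw [real_inner_self_eq_norm_sq]
  rw [← hrw s, ← hrw t, heq]
end

section
/- Let N ∈ ℕ, Γ₁,…,Γ_N be real numbers, P_K : (0,∞) → ℝ a continuous function, and let H_P : (0,∞) → ℝ be differentiable with H_P'(r) = P_K(√r)/(2r) for all r > 0. If X₁,…,X_N is a solution of the EP-PV system on an interval J ⊆ ℝ, then the Hamiltonian t ↦ −(1/(2π)) Σ_{1 ≤ m < n ≤ N} Γ_m Γ_n H_P(|X_m(t) − X_n(t)|²) is constant on J. -/
open scoped BigOperators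

open scoped RealInnerProductSpace

lemma perp_inner_antisymm (v w : EuclideanSpace ℝ (Fin 2)) :
    ⟪perp v, w⟫ = - ⟪perp w, v⟫ := by
  simp [perp, PiLp.inner_apply, Fin.sum_univ_two, PiLp.toLp_apply]
  ring

lemma sum_antisymm_zero {ι : Type*} (s : Finset ι) (g : ι → ι → ℝ)
    (h : ∀ k n, g k n = - g n k) : ∑ k ∈ s, ∑ n ∈ s, g k n = 0 := by
  have h0 : ∑ k ∈ s, ∑ n ∈ s, (g k n + g n k) = 0 := by
    apply Finset.sum_eq_zero; intro k _
    apply Finset.sum_eq_zero; intro n _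
    rw [h]; ring
  have h1 : ∑ k ∈ s, ∑ n ∈ s, g n k = ∑ k ∈ s, ∑ n ∈ s, g k n := Finset.sum_comm
  simp only [Finset.sum_add_distrib] at h0
  linarith

lemma sum_pairs {N : ℕ} (F : Fin N → Fin N → ℝ) :
    ∑ m : Fin N, ∑ n ∈ Finset.univ.filter (fun n => m < n), (F m n + F n m)
      = ∑ m : Fin N, ∑ n ∈ Finset.univ.filter (fun n => n ≠ m), F m n := by
  have hsplit : ∀ m : Fin N, ∑ n ∈ Finset.univ.filter (fun n => n ≠ m), F m n
      = ∑ n ∈ Finset.univ.filter (fun n => m < n), F m n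
        + ∑ n ∈ Finset.univ.filter (fun n => n < m), F m n := by
    intro m
    rw [← Finset.sum_union]
    · apply Finset.sum_congr _ (fun _ _ => rfl)
      rw [← Finset.filter_or]
      apply Finset.filter_congr
      intro n _
      simp only [ne_iff_lt_or_gt, gt_iff_lt]
      tauto
    · rw [Finset.disjoint_filter]
      intro n _ h1 h2
      exact absurd h1 (not_lt_of_gt h2)
  have hswap : ∑ m : Fin N, ∑ n ∈ Finset.univ.filter (fun n => n < m), F m n
      = ∑ m : Fin N, ∑ n ∈ Finset.univ.filter (fun n => m < n), F n m := by
    rw [Finset.sum_comm' (s' := fun y => Finset.univ.filter fun x => y < x)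
      (t' := Finset.univ)]
    intro x y
    simp
  simp only [hsplit, Finset.sum_add_distrib, hswap]

lemma key_alg {N : ℕ} (Γ : Fin N → ℝ) (P_K : ℝ → ℝ) (Y : Fin N → EuclideanSpace ℝ (Fin 2)) :
    ∑ m : Fin N, ∑ n ∈ Finset.univ.filter (fun n => m < n),
      Γ m * Γ n * ((P_K ‖Y m - Y n‖ / ‖Y m - Y n‖ ^ 2) *
        ⟪eppvRHS Γ P_K Y m - eppvRHS Γ P_K Y n, Y m - Y n⟫) = 0 := by
  set V := eppvRHS Γ P_K Y with hV
  set b : Fin N → Fin N → ℝ :=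
    fun m k => Γ k * P_K ‖Y m - Y k‖ / ‖Y m - Y k‖ ^ 2 with hb
  set F : Fin N → Fin N → ℝ := fun m n => Γ m * b m n * ⟪V m, Y m - Y n⟫ with hF
  have hterm : ∀ m n : Fin N,
      Γ m * Γ n * ((P_K ‖Y m - Y n‖ / ‖Y m - Y n‖ ^ 2) * ⟪V m - V n, Y m - Y n⟫)
        = F m n + F n m := by
    intro m n
    have h2 : ⟪V n, Y n - Y m⟫ = - ⟪V n, Y m - Y n⟫ := by
      rw [← neg_sub (Y m) (Y n), inner_neg_right]
    simp only [hF, hb, inner_sub_left, h2, norm_sub_rev (Y n) (Y m)]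
    ring
  simp only [hterm]
  rw [sum_pairs]
  apply Finset.sum_eq_zero
  intro m _
  have hVm : V m = (-(1 / (2 * Real.pi))) •
      ∑ k ∈ Finset.univ.filter (fun k => k ≠ m), b m k • perp (Y m - Y k) := by
    rw [hV]; rfl
  have hinner : ∀ n : Fin N, ⟪V m, Y m - Y n⟫
      = ∑ k ∈ Finset.univ.filter (fun k => k ≠ m),
          (-(1 / (2 * Real.pi))) * (b m k * ⟪perp (Y m - Y k), Y m - Y n⟫) := by
    intro n
    rw [hVm, real_inner_smul_left, sum_inner, Finset.mul_sum]
    exact Finset.sum_congr rfl fun k _ => by rw [real_inner_smul_left]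
  have expand : ∀ n : Fin N, F m n
      = ∑ k ∈ Finset.univ.filter (fun k => k ≠ m),
          Γ m * b m n * ((-(1 / (2 * Real.pi))) * (b m k * ⟪perp (Y m - Y k), Y m - Y n⟫)) := by
    intro n
    rw [hF]
    simp only
    rw [hinner n, Finset.mul_sum]
  calc ∑ n ∈ Finset.univ.filter (fun n => n ≠ m), F m n
      = ∑ n ∈ Finset.univ.filter (fun n => n ≠ m),
          ∑ k ∈ Finset.univ.filter (fun k => k ≠ m),
          Γ m * b m n * ((-(1 / (2 * Real.pi))) * (b m k * ⟪perp (Y m - Y k), Y m - Y n⟫)) :=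
        Finset.sum_congr rfl fun n _ => expand n
    _ = 0 := by
        apply sum_antisymm_zero
        intro n k
        rw [perp_inner_antisymm]
        ring

lemma pair_deriv (P_K : ℝ → ℝ) (H_P : ℝ → ℝ)
    (hHP : ∀ r : ℝ, 0 < r → HasDerivAt H_P (P_K (Real.sqrt r) / (2 * r)) r)
    (J : Set ℝ) (t : ℝ)
    (f : ℝ → EuclideanSpace ℝ (Fin 2)) (f' : EuclideanSpace ℝ (Fin 2))
    (hf : HasDerivWithinAt f f' J t) (hne : f t ≠ 0) :
    HasDerivWithinAt (fun τ => H_P (‖f τ‖ ^ 2))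
      ((P_K ‖f t‖ / ‖f t‖ ^ 2) * ⟪f', f t⟫) J t := by
  have hin : HasDerivWithinAt (fun τ => ‖f τ‖ ^ 2) (⟪f t, f'⟫ + ⟪f', f t⟫) J t := by
    have := hf.inner ℝ hf
    simpa only [real_inner_self_eq_norm_sq] using this
  have hr : (0:ℝ) < ‖f t‖ ^ 2 := pow_pos (norm_pos_iff.mpr hne) 2
  have hcomp := (hHP _ hr).comp_hasDerivWithinAt t hin
  refine HasDerivWithinAt.congr_deriv hcomp ?_
  rw [Real.sqrt_sq (norm_nonneg _), real_inner_comm (f t) f']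
  have hL : ‖f t‖ ≠ 0 := norm_ne_zero_iff.mpr hne
  field_simp
  ring

/-- Let `H_P` be differentiable on `(0,∞)` with
`H_P'(r) = P_K(√r)/(2r)`. Along any solution of the EP-PV system on an interval `J`,
the Hamiltonian `−(1/2π) Σ_{m<n} Γ_m Γ_n H_P(|X_m − X_n|²)` is constant. -/
theorem eppv_hamiltonian_const {N : ℕ} (Γ : Fin N → ℝ) (P_K : ℝ → ℝ)
    (hPK : ContinuousOn P_K (Set.Ioi 0))
    (H_P : ℝ → ℝ)
    (hHP : ∀ r : ℝ, 0 < r → HasDerivAt H_P (P_K (Real.sqrt r) / (2 * r)) r)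
    (J : Set ℝ) (hJ : Convex ℝ J)
    (X : Fin N → ℝ → EuclideanSpace ℝ (Fin 2))
    (hX : IsEPPVSolution Γ P_K J X) :
    ∀ s ∈ J, ∀ t ∈ J,
      (-(1 / (2 * Real.pi))) * ∑ m : Fin N, ∑ n ∈ Finset.univ.filter (fun n => m < n),
          Γ m * Γ n * H_P (‖X m s - X n s‖ ^ 2)
        = (-(1 / (2 * Real.pi))) * ∑ m : Fin N, ∑ n ∈ Finset.univ.filter (fun n => m < n),
          Γ m * Γ n * H_P (‖X m t - X n t‖ ^ 2) := by
  obtain ⟨hsep, hderiv⟩ := hX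
  set g : ℝ → ℝ := fun τ => ∑ m : Fin N, ∑ n ∈ Finset.univ.filter (fun n => m < n),
      Γ m * Γ n * H_P (‖X m τ - X n τ‖ ^ 2) with hg
  have key : ∀ τ ∈ J, HasDerivWithinAt g 0 J τ := by
    intro τ hτ
    have hD : HasDerivWithinAt g
        (∑ m : Fin N, ∑ n ∈ Finset.univ.filter (fun n => m < n),
          Γ m * Γ n * ((P_K ‖X m τ - X n τ‖ / ‖X m τ - X n τ‖ ^ 2) *
            ⟪eppvRHS Γ P_K (fun i => X i τ) m - eppvRHS Γ P_K (fun i => X i τ) n,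
              X m τ - X n τ⟫)) J τ := by
      apply HasDerivWithinAt.fun_sum
      intro m _
      apply HasDerivWithinAt.fun_sum
      intro n hn
      have hmn : m ≠ n := ((Finset.mem_filter.mp hn).2).ne
      have hsub : HasDerivWithinAt (fun σ => X m σ - X n σ)
          (eppvRHS Γ P_K (fun i => X i τ) m - eppvRHS Γ P_K (fun i => X i τ) n) J τ :=
        (hderiv m τ hτ).sub (hderiv n τ hτ)
      have hne0 : X m τ - X n τ ≠ 0 := sub_ne_zero.mpr (hsep m n hmn τ hτ)
      exact (pair_deriv P_K H_P hHP J τ _ _ hsub hne0).const_mul (Γ m * Γ n)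
    have h0 := key_alg Γ P_K (fun i => X i τ)
    rwa [h0] at hD
  intro s hs t ht
  have hb := hJ.norm_image_sub_le_of_norm_hasDerivWithin_le (C := 0)
      (f' := fun _ => (0:ℝ)) (fun x hx => key x hx) (fun x _ => by simp) hs ht
  have hgst : g s = g t :=
    (sub_eq_zero.mp (norm_le_zero_iff.mp (by simpa using hb))).symm
  exact congrArg (fun z => -(1 / (2 * Real.pi)) * z) hgst
end

section
/- Let Γ₁, Γ₂, Γ₃ be real numbers, P_K : (0,∞) → ℝ continuous, and let (X₁, X₂, X₃) be a solution of the EP-PV system with N = 3 on an interval J. Write L_{mn}(t) = |X_m(t) − X_n(t)| and let A(t) = (1/2)·((X₂(t)−X₁(t)) ∧ (X₃(t)−X₁(t))) be the signed area of the triangle, where (u₁,u₂) ∧ (v₁,v₂) := u₁v₂ − u₂v₁. Then for all t ∈ J, d/dt (L₁₂(t)²) = (2/π) Γ₃ A(t) [ P_K(L₂₃(t))/L₂₃(t)² − P_K(L₃₁(t))/L₃₁(t)² ], and the analogous identities hold for L₂₃² (with Γ₁ and the pair L₃₁, L₁₂) and for L₃₁² (with Γ₂ and the pair L₁₂, L₂₃).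 -/
open scoped BigOperators RealInnerProductSpace

/-- The wedge product `u ∧ v = u₁v₂ − u₂v₁` of two vectors in ℝ². -/
noncomputable def wedge (u v : EuclideanSpace ℝ (Fin 2)) : ℝ :=
  u 0 * v 1 - u 1 * v 0

/-- For a solution `(X₁,X₂,X₃)` of the three-vortex EP-PV system,
with `A(t)` the signed area of the triangle, the squared mutual distances satisfy
`d/dt L₁₂² = (2/π) Γ₃ A [P_K(L₂₃)/L₂₃² − P_K(L₃₁)/L₃₁²]` and its cyclic analogues.
Here the vortices are indexed by `0, 1, 2`. -/
theorem eppv_three_vortex_distance_eq (Γ : Fin 3 → ℝ) (P_K : ℝ → ℝ)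
    (hPK : ContinuousOn P_K (Set.Ioi 0)) (J : Set ℝ)
    (X : Fin 3 → ℝ → EuclideanSpace ℝ (Fin 2))
    (hX : IsEPPVSolution Γ P_K J X)
    (A : ℝ → ℝ)
    (hA : ∀ t, A t = (1 / 2) * wedge (X 1 t - X 0 t) (X 2 t - X 0 t)) :
    ∀ t ∈ J,
      HasDerivWithinAt (fun τ => ‖X 0 τ - X 1 τ‖ ^ 2)
        ((2 / Real.pi) * Γ 2 * A t *
          (P_K ‖X 1 t - X 2 t‖ / ‖X 1 t - X 2 t‖ ^ 2
            - P_K ‖X 2 t - X 0 t‖ / ‖X 2 t - X 0 t‖ ^ 2)) J t ∧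
      HasDerivWithinAt (fun τ => ‖X 1 τ - X 2 τ‖ ^ 2)
        ((2 / Real.pi) * Γ 0 * A t *
          (P_K ‖X 2 t - X 0 t‖ / ‖X 2 t - X 0 t‖ ^ 2
            - P_K ‖X 0 t - X 1 t‖ / ‖X 0 t - X 1 t‖ ^ 2)) J t ∧
      HasDerivWithinAt (fun τ => ‖X 2 τ - X 0 τ‖ ^ 2)
        ((2 / Real.pi) * Γ 1 * A t *
          (P_K ‖X 0 t - X 1 t‖ / ‖X 0 t - X 1 t‖ ^ 2
            - P_K ‖X 1 t - X 2 t‖ / ‖X 1 t - X 2 t‖ ^ 2)) J t := by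
  intro t ht
  have h0 := hX.2 0 t ht
  have h1 := hX.2 1 t ht
  have h2 := hX.2 2 t ht
  refine ⟨?_, ?_, ?_⟩
  · have hfun : (fun τ => ‖X 0 τ - X 1 τ‖ ^ 2) =
        fun τ => ⟪X 0 τ - X 1 τ, X 0 τ - X 1 τ⟫ :=
      funext fun τ => (real_inner_self_eq_norm_sq _).symm
    rw [hfun]
    have hd := HasDerivWithinAt.inner ℝ (h0.sub h1) (h0.sub h1)
    convert hd using 1
    · rfl
    · rfl
    · rfl
    rw [hA]
    simp only [eppvRHS, wedge, Finset.sum_filter, Fin.sum_univ_three,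
      show ((0:Fin 3) = 1) = False by decide, show ((0:Fin 3) = 2) = False by decide,
      show ((1:Fin 3) = 0) = False by decide, show ((1:Fin 3) = 2) = False by decide,
      show ((2:Fin 3) = 0) = False by decide, show ((2:Fin 3) = 1) = False by decide,
      PiLp.inner_apply, Fin.sum_univ_two, RCLike.inner_apply, conj_trivial,
      PiLp.sub_apply, PiLp.smul_apply, PiLp.add_apply, smul_eq_mul, perp,
      WithLp.equiv_symm_apply, WithLp.ofLp_toLp, Pi.sub_apply, Matrix.cons_val_zero, Matrix.cons_val_one,
      Matrix.head_cons, ne_eq, Fin.isValue, ite_true, ite_false, reduceIte,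
      neg_mul, mul_neg, if_true, if_false, not_false_eq_true, not_true, PiLp.zero_apply,
      show ‖X 2 t - X 0 t‖ = ‖X 0 t - X 2 t‖ from norm_sub_rev _ _,
      show ‖X 2 t - X 1 t‖ = ‖X 1 t - X 2 t‖ from norm_sub_rev _ _,
      show ‖X 1 t - X 0 t‖ = ‖X 0 t - X 1 t‖ from norm_sub_rev _ _]
    ring
  · have hfun : (fun τ => ‖X 1 τ - X 2 τ‖ ^ 2) =
        fun τ => ⟪X 1 τ - X 2 τ, X 1 τ - X 2 τ⟫ :=
      funext fun τ => (real_inner_self_eq_norm_sq _).symm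
    rw [hfun]
    have hd := HasDerivWithinAt.inner ℝ (h1.sub h2) (h1.sub h2)
    convert hd using 1
    · rfl
    · rfl
    · rfl
    rw [hA]
    simp only [eppvRHS, wedge, Finset.sum_filter, Fin.sum_univ_three,
      show ((0:Fin 3) = 1) = False by decide, show ((0:Fin 3) = 2) = False by decide,
      show ((1:Fin 3) = 0) = False by decide, show ((1:Fin 3) = 2) = False by decide,
      show ((2:Fin 3) = 0) = False by decide, show ((2:Fin 3) = 1) = False by decide,
      PiLp.inner_apply, Fin.sum_univ_two, RCLike.inner_apply, conj_trivial,
      PiLp.sub_apply, PiLp.smul_apply, PiLp.add_apply, smul_eq_mul, perp,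
      WithLp.equiv_symm_apply, WithLp.ofLp_toLp, Pi.sub_apply, Matrix.cons_val_zero, Matrix.cons_val_one,
      Matrix.head_cons, ne_eq, Fin.isValue, ite_true, ite_false, reduceIte,
      neg_mul, mul_neg, if_true, if_false, not_false_eq_true, not_true, PiLp.zero_apply,
      show ‖X 2 t - X 0 t‖ = ‖X 0 t - X 2 t‖ from norm_sub_rev _ _,
      show ‖X 2 t - X 1 t‖ = ‖X 1 t - X 2 t‖ from norm_sub_rev _ _,
      show ‖X 1 t - X 0 t‖ = ‖X 0 t - X 1 t‖ from norm_sub_rev _ _]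
    ring
  · have hfun : (fun τ => ‖X 2 τ - X 0 τ‖ ^ 2) =
        fun τ => ⟪X 2 τ - X 0 τ, X 2 τ - X 0 τ⟫ :=
      funext fun τ => (real_inner_self_eq_norm_sq _).symm
    rw [hfun]
    have hd := HasDerivWithinAt.inner ℝ (h2.sub h0) (h2.sub h0)
    convert hd using 1
    · rfl
    · rfl
    · rfl
    rw [hA]
    simp only [eppvRHS, wedge, Finset.sum_filter, Fin.sum_univ_three,
      show ((0:Fin 3) = 1) = False by decide, show ((0:Fin 3) = 2) = False by decide,
      show ((1:Fin 3) = 0) = False by decide, show ((1:Fin 3) = 2) = False by decide,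
      show ((2:Fin 3) = 0) = False by decide, show ((2:Fin 3) = 1) = False by decide,
      PiLp.inner_apply, Fin.sum_univ_two, RCLike.inner_apply, conj_trivial,
      PiLp.sub_apply, PiLp.smul_apply, PiLp.add_apply, smul_eq_mul, perp,
      WithLp.equiv_symm_apply, WithLp.ofLp_toLp, Pi.sub_apply, Matrix.cons_val_zero, Matrix.cons_val_one,
      Matrix.head_cons, ne_eq, Fin.isValue, ite_true, ite_false, reduceIte,
      neg_mul, mul_neg, if_true, if_false, not_false_eq_true, not_true, PiLp.zero_apply,
      show ‖X 2 t - X 0 t‖ = ‖X 0 t - X 2 t‖ from norm_sub_rev _ _,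
      show ‖X 2 t - X 1 t‖ = ‖X 1 t - X 2 t‖ from norm_sub_rev _ _,
      show ‖X 1 t - X 0 t‖ = ‖X 0 t - X 1 t‖ from norm_sub_rev _ _]
    ring
end

section
/- Let h_r : [0,∞) → (0,∞) be continuous with 2π ∫₀^∞ s h_r(s) ds = 1 and ∫₀^∞ s² h_r(s) ds < ∞, and define P_K(r) := 2π ∫₀^r s h_r(s) ds. Let Γ₁, Γ₂, Γ₃ be nonzero real numbers and let (X₁, X₂, X₃) be a solution of the EP-PV system with N = 3 defined on all of ℝ. If |X_m(t) − X_n(t)| → ∞ as t → +∞ and as t → −∞ for every pair m ≠ n, then 1/Γ₁ + 1/Γ₂ + 1/Γ₃ = 0. -/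
open scoped BigOperators

/-! ### Auxiliary material for the proof -/

open Filter MeasureTheory Set Topology intervalIntegral

section AuxAnalysis

variable {h_r : ℝ → ℝ} {P_K : ℝ → ℝ}

private theorem aux_phi_contOn (hcont : ContinuousOn h_r (Set.Ici 0)) :
    ContinuousOn (fun s => s * h_r s) (Set.Ici 0) :=
  continuousOn_id.mul hcont

private theorem aux_phi_ii (hcont : ContinuousOn h_r (Set.Ici 0)) {a b : ℝ}
    (ha : 0 ≤ a) (hb : 0 ≤ b) :
    IntervalIntegrable (fun s => s * h_r s) volume a b := by
  apply ContinuousOn.intervalIntegrable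
  apply (aux_phi_contOn hcont).mono
  intro x hx
  rcases Set.mem_uIcc.1 hx with h | h
  · exact le_trans ha h.1
  · exact le_trans hb h.1

private theorem aux_PK_hasDeriv (hcont : ContinuousOn h_r (Set.Ici 0))
    (hPK : ∀ r : ℝ, P_K r = 2 * Real.pi * ∫ s in (0 : ℝ)..r, s * h_r s)
    {r : ℝ} (hr : 0 < r) :
    HasDerivAt P_K (2 * Real.pi * (r * h_r r)) r := by
  have hco : ContinuousOn (fun s => s * h_r s) (Set.Ioi 0) :=
    (aux_phi_contOn hcont).mono Set.Ioi_subset_Ici_self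
  have h1 : HasDerivAt (fun u => ∫ s in (0:ℝ)..u, s * h_r s) (r * h_r r) r := by
    apply intervalIntegral.integral_hasDerivAt_right (aux_phi_ii hcont le_rfl hr.le)
    · exact ContinuousOn.stronglyMeasurableAtFilter isOpen_Ioi hco r hr
    · exact (hco r hr).continuousAt (Ioi_mem_nhds hr)
  have := h1.const_mul (2 * Real.pi)
  apply this.congr_of_eventuallyEq
  filter_upwards with x using (hPK x)

private theorem aux_PK_contAt (hcont : ContinuousOn h_r (Set.Ici 0))
    (hPK : ∀ r : ℝ, P_K r = 2 * Real.pi * ∫ s in (0 : ℝ)..r, s * h_r s)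
    {r : ℝ} (hr : 0 < r) : ContinuousAt P_K r :=
  (aux_PK_hasDeriv hcont hPK hr).continuousAt

private theorem aux_PK_tail (hcont : ContinuousOn h_r (Set.Ici 0))
    (hint1 : MeasureTheory.IntegrableOn (fun s => s * h_r s) (Set.Ioi 0))
    (hnorm : 2 * Real.pi * ∫ s in Set.Ioi (0 : ℝ), s * h_r s = 1)
    (hPK : ∀ r : ℝ, P_K r = 2 * Real.pi * ∫ s in (0 : ℝ)..r, s * h_r s)
    {r : ℝ} (hr : 0 < r) :
    1 - P_K r = 2 * Real.pi * ∫ s in Set.Ioi r, s * h_r s := by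
  have hsplit : (∫ s in Set.Ioi (0:ℝ), s * h_r s)
      = (∫ s in Set.Ioc 0 r, s * h_r s) + ∫ s in Set.Ioi r, s * h_r s := by
    rw [← MeasureTheory.setIntegral_union]
    · rw [Set.Ioc_union_Ioi_eq_Ioi hr.le]
    · exact Set.Ioc_disjoint_Ioi le_rfl
    · exact measurableSet_Ioi
    · exact hint1.mono_set Set.Ioc_subset_Ioi_self
    · exact hint1.mono_set (Set.Ioi_subset_Ioi hr.le)
  have hiv : P_K r = 2 * Real.pi * ∫ s in Set.Ioc 0 r, s * h_r s := by
    rw [hPK r, intervalIntegral.integral_of_le hr.le]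
  rw [← hnorm, hiv, hsplit]; ring

private theorem aux_tail_nonneg (hpos : ∀ s : ℝ, 0 ≤ s → 0 < h_r s) {r : ℝ} (hr : 0 < r) :
    0 ≤ ∫ s in Set.Ioi r, s * h_r s := by
  apply MeasureTheory.setIntegral_nonneg measurableSet_Ioi
  intro x hx
  have hx' : 0 < x := lt_trans hr hx
  exact (mul_pos hx' (hpos x hx'.le)).le

private theorem aux_tail_le (hpos : ∀ s : ℝ, 0 ≤ s → 0 < h_r s)
    (hint1 : MeasureTheory.IntegrableOn (fun s => s * h_r s) (Set.Ioi 0))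
    (hint2 : MeasureTheory.IntegrableOn (fun s => s ^ 2 * h_r s) (Set.Ioi 0))
    {r : ℝ} (hr : 0 < r) :
    ∫ s in Set.Ioi r, s * h_r s ≤ (∫ s in Set.Ioi (0:ℝ), s ^ 2 * h_r s) / r := by
  have h1 : ∫ s in Set.Ioi r, s * h_r s ≤ ∫ s in Set.Ioi r, (s ^ 2 * h_r s) / r := by
    apply MeasureTheory.setIntegral_mono_on
    · exact hint1.mono_set (Set.Ioi_subset_Ioi hr.le)
    · exact (hint2.mono_set (Set.Ioi_subset_Ioi hr.le)).div_const r
    · exact measurableSet_Ioi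
    · intro x hx
      have hx' : r < x := hx
      have h0 : 0 < x := lt_trans hr hx'
      rw [le_div_iff₀ hr]
      have h2 := (hpos x h0.le).le
      nlinarith [mul_nonneg (mul_nonneg h0.le h2) (sub_nonneg.2 hx'.le)]
  have h2 : ∫ s in Set.Ioi r, (s ^ 2 * h_r s) / r = (∫ s in Set.Ioi r, s ^ 2 * h_r s) / r := by
    simp [MeasureTheory.integral_div]
  have h3 : ∫ s in Set.Ioi r, s ^ 2 * h_r s ≤ ∫ s in Set.Ioi (0:ℝ), s ^ 2 * h_r s := by
    apply MeasureTheory.setIntegral_mono_set hint2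
    · filter_upwards [MeasureTheory.ae_restrict_mem measurableSet_Ioi] with x hx
      have h0 : (0:ℝ) < x := hx
      exact (mul_pos (pow_pos h0 2) (hpos x h0.le)).le
    · exact (Set.Ioi_subset_Ioi hr.le).eventuallyLE
  calc ∫ s in Set.Ioi r, s * h_r s ≤ _ := h1
    _ = _ := h2
    _ ≤ _ := (div_le_div_iff_of_pos_right hr).2 h3

private theorem aux_fg_contAt (hcont : ContinuousOn h_r (Set.Ici 0))
    (hPK : ∀ r : ℝ, P_K r = 2 * Real.pi * ∫ s in (0 : ℝ)..r, s * h_r s)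
    (c d : ℝ) {x : ℝ} (hx : 0 < x) :
    ContinuousAt (fun x => (c + d * P_K (Real.sqrt x)) / (2 * x)) x := by
  have h1 : ContinuousAt (fun x => P_K (Real.sqrt x)) x :=
    (aux_PK_contAt hcont hPK (Real.sqrt_pos.2 hx)).comp Real.continuous_sqrt.continuousAt
  exact ((continuousAt_const.add (continuousAt_const.mul h1))).div
    (continuousAt_const.mul continuousAt_id) (by positivity)

private theorem aux_fg_ii (hcont : ContinuousOn h_r (Set.Ici 0))
    (hPK : ∀ r : ℝ, P_K r = 2 * Real.pi * ∫ s in (0 : ℝ)..r, s * h_r s)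
    (c d : ℝ) {a b : ℝ} (ha : 0 < a) (hb : 0 < b) :
    IntervalIntegrable (fun x => (c + d * P_K (Real.sqrt x)) / (2 * x)) volume a b := by
  apply ContinuousOn.intervalIntegrable
  intro x hx
  have hx0 : 0 < x := lt_of_lt_of_le (lt_min ha hb) hx.1
  exact (aux_fg_contAt hcont hPK c d hx0).continuousWithinAt

private theorem aux_psi_hasDeriv (hcont : ContinuousOn h_r (Set.Ici 0))
    (hPK : ∀ r : ℝ, P_K r = 2 * Real.pi * ∫ s in (0 : ℝ)..r, s * h_r s)
    {q : ℝ} (hq : 0 < q) :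
    HasDerivAt (fun q => ∫ x in (1:ℝ)..q, (0 + 1 * P_K (Real.sqrt x)) / (2 * x))
      ((0 + 1 * P_K (Real.sqrt q)) / (2 * q)) q := by
  apply intervalIntegral.integral_hasDerivAt_right (aux_fg_ii hcont hPK 0 1 one_pos hq)
  · refine ContinuousOn.stronglyMeasurableAtFilter isOpen_Ioi ?_ q hq
    intro x hx
    exact (aux_fg_contAt hcont hPK 0 1 hx).continuousWithinAt
  · exact aux_fg_contAt hcont hPK 0 1 hq

private theorem aux_g_nonneg (hcont : ContinuousOn h_r (Set.Ici 0))
    (hpos : ∀ s : ℝ, 0 ≤ s → 0 < h_r s)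
    (hint1 : MeasureTheory.IntegrableOn (fun s => s * h_r s) (Set.Ioi 0))
    (hnorm : 2 * Real.pi * ∫ s in Set.Ioi (0 : ℝ), s * h_r s = 1)
    (hPK : ∀ r : ℝ, P_K r = 2 * Real.pi * ∫ s in (0 : ℝ)..r, s * h_r s)
    {x : ℝ} (hx : 0 < x) :
    0 ≤ (1 + (-1) * P_K (Real.sqrt x)) / (2 * x) := by
  have hs : 0 < Real.sqrt x := Real.sqrt_pos.2 hx
  have h1 := aux_PK_tail hcont hint1 hnorm hPK hs
  have h2 := aux_tail_nonneg hpos hs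
  have : (0:ℝ) ≤ 1 - P_K (Real.sqrt x) := by
    rw [h1]; positivity
  apply div_nonneg (by linarith) (by positivity)

private theorem aux_g_le (hcont : ContinuousOn h_r (Set.Ici 0))
    (hpos : ∀ s : ℝ, 0 ≤ s → 0 < h_r s)
    (hint1 : MeasureTheory.IntegrableOn (fun s => s * h_r s) (Set.Ioi 0))
    (hnorm : 2 * Real.pi * ∫ s in Set.Ioi (0 : ℝ), s * h_r s = 1)
    (hint2 : MeasureTheory.IntegrableOn (fun s => s ^ 2 * h_r s) (Set.Ioi 0))
    (hPK : ∀ r : ℝ, P_K r = 2 * Real.pi * ∫ s in (0 : ℝ)..r, s * h_r s)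
    {x : ℝ} (hx : 1 ≤ x) :
    (1 + (-1) * P_K (Real.sqrt x)) / (2 * x)
      ≤ (Real.pi * ∫ s in Set.Ioi (0:ℝ), s ^ 2 * h_r s) * x ^ (-(3:ℝ)/2) := by
  have hx0 : (0:ℝ) < x := lt_of_lt_of_le one_pos hx
  have hs : 0 < Real.sqrt x := Real.sqrt_pos.2 hx0
  have h1 := aux_PK_tail hcont hint1 hnorm hPK hs
  have h2 := (aux_tail_le hpos hint1 hint2 hs)
  have hM : 0 ≤ ∫ s in Set.Ioi (0:ℝ), s ^ 2 * h_r s := by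
    apply MeasureTheory.setIntegral_nonneg measurableSet_Ioi
    intro s hsx
    have : (0:ℝ) < s := hsx
    exact (mul_pos (pow_pos this 2) (hpos s this.le)).le
  set M := ∫ s in Set.Ioi (0:ℝ), s ^ 2 * h_r s with hMdef
  have key : 1 - P_K (Real.sqrt x) ≤ 2 * Real.pi * (M / Real.sqrt x) := by
    rw [h1]
    have hpi : (0:ℝ) < 2 * Real.pi := by positivity
    exact mul_le_mul_of_nonneg_left h2 hpi.le
  have hrpow : x ^ (-(3:ℝ)/2) = 1 / (Real.sqrt x * x) := by
    rw [Real.sqrt_eq_rpow]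
    rw [show (-(3:ℝ)/2) = -(3/2 : ℝ) by norm_num, Real.rpow_neg hx0.le]
    rw [show ((3:ℝ)/2) = 1/2 + 1 by norm_num, Real.rpow_add hx0, Real.rpow_one]
    exact (one_div _).symm
  rw [hrpow]
  calc (1 + (-1) * P_K (Real.sqrt x)) / (2 * x) = (1 - P_K (Real.sqrt x)) / (2 * x) := by ring_nf
    _ ≤ (2 * Real.pi * (M / Real.sqrt x)) / (2 * x) := by gcongr
    _ = Real.pi * M * (1 / (Real.sqrt x * x)) := by
        field_simp

private theorem aux_RRm_mono (hcont : ContinuousOn h_r (Set.Ici 0))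
    (hpos : ∀ s : ℝ, 0 ≤ s → 0 < h_r s)
    (hint1 : MeasureTheory.IntegrableOn (fun s => s * h_r s) (Set.Ioi 0))
    (hnorm : 2 * Real.pi * ∫ s in Set.Ioi (0 : ℝ), s * h_r s = 1)
    (hPK : ∀ r : ℝ, P_K r = 2 * Real.pi * ∫ s in (0 : ℝ)..r, s * h_r s) :
    Monotone (fun q : ℝ => ∫ x in (1:ℝ)..(max 1 q), (1 + (-1) * P_K (Real.sqrt x)) / (2 * x)) := by
  intro q1 q2 hq
  simp only
  set m1 := max 1 q1
  set m2 := max 1 q2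
  have h1 : (1:ℝ) ≤ m1 := le_max_left _ _
  have h2 : m1 ≤ m2 := max_le_max le_rfl hq
  have hii1 : IntervalIntegrable (fun x => (1 + (-1) * P_K (Real.sqrt x)) / (2 * x)) volume 1 m1 :=
    aux_fg_ii hcont hPK 1 (-1) one_pos (lt_of_lt_of_le one_pos h1)
  have hii2 : IntervalIntegrable (fun x => (1 + (-1) * P_K (Real.sqrt x)) / (2 * x)) volume m1 m2 :=
    aux_fg_ii hcont hPK 1 (-1) (lt_of_lt_of_le one_pos h1) (lt_of_lt_of_le one_pos (h1.trans h2))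
  rw [← intervalIntegral.integral_add_adjacent_intervals hii1 hii2]
  have : 0 ≤ ∫ x in m1..m2, (1 + (-1) * P_K (Real.sqrt x)) / (2 * x) := by
    apply intervalIntegral.integral_nonneg h2
    intro x hx
    exact aux_g_nonneg hcont hpos hint1 hnorm hPK (lt_of_lt_of_le one_pos (h1.trans hx.1))
  linarith

private theorem aux_RRm_bdd (hcont : ContinuousOn h_r (Set.Ici 0))
    (hpos : ∀ s : ℝ, 0 ≤ s → 0 < h_r s)
    (hint1 : MeasureTheory.IntegrableOn (fun s => s * h_r s) (Set.Ioi 0))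
    (hnorm : 2 * Real.pi * ∫ s in Set.Ioi (0 : ℝ), s * h_r s = 1)
    (hint2 : MeasureTheory.IntegrableOn (fun s => s ^ 2 * h_r s) (Set.Ioi 0))
    (hPK : ∀ r : ℝ, P_K r = 2 * Real.pi * ∫ s in (0 : ℝ)..r, s * h_r s)
    (q : ℝ) :
    (∫ x in (1:ℝ)..(max 1 q), (1 + (-1) * P_K (Real.sqrt x)) / (2 * x))
      ≤ 2 * (Real.pi * ∫ s in Set.Ioi (0:ℝ), s ^ 2 * h_r s) := by
  set m := max 1 q
  have h1 : (1:ℝ) ≤ m := le_max_left _ _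
  have hm0 : (0:ℝ) < m := lt_of_lt_of_le one_pos h1
  set C := Real.pi * ∫ s in Set.Ioi (0:ℝ), s ^ 2 * h_r s with hC
  have hC0 : 0 ≤ C := by
    apply mul_nonneg Real.pi_pos.le
    apply MeasureTheory.setIntegral_nonneg measurableSet_Ioi
    intro s hs
    have : (0:ℝ) < s := hs
    exact (mul_pos (pow_pos this 2) (hpos s this.le)).le
  have hiirpow : IntervalIntegrable (fun x : ℝ => C * x ^ (-(3:ℝ)/2)) volume 1 m := by
    apply ContinuousOn.intervalIntegrable
    apply ContinuousOn.mul continuousOn_const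
    intro x hx
    have hx0 : (0:ℝ) < x := by
      rcases Set.mem_uIcc.1 hx with h | h
      · exact lt_of_lt_of_le one_pos h.1
      · exact lt_of_lt_of_le hm0 h.1
    exact (Real.continuousAt_rpow_const x _ (Or.inl hx0.ne')).continuousWithinAt
  have hmono : (∫ x in (1:ℝ)..m, (1 + (-1) * P_K (Real.sqrt x)) / (2 * x))
      ≤ ∫ x in (1:ℝ)..m, C * x ^ (-(3:ℝ)/2) := by
    apply intervalIntegral.integral_mono_on h1
      (aux_fg_ii hcont hPK 1 (-1) one_pos hm0) hiirpow
    intro x hx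
    exact aux_g_le hcont hpos hint1 hnorm hint2 hPK hx.1
  have hval : ∫ x in (1:ℝ)..m, C * x ^ (-(3:ℝ)/2) = C * ((m ^ (-(1:ℝ)/2) - 1) / (-(1:ℝ)/2)) := by
    rw [intervalIntegral.integral_const_mul]
    congr 1
    rw [integral_rpow]
    · norm_num
    · right
      constructor
      · norm_num
      · intro h
        rcases Set.mem_uIcc.1 h with h | h
        · linarith [h.1]
        · linarith [h.1, hm0]
  have hle2 : C * ((m ^ (-(1:ℝ)/2) - 1) / (-(1:ℝ)/2)) ≤ 2 * C := by
    have hrp : (0:ℝ) ≤ m ^ (-(1:ℝ)/2) := Real.rpow_nonneg hm0.le _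
    have : (m ^ (-(1:ℝ)/2) - 1) / (-(1:ℝ)/2) = 2 * (1 - m ^ (-(1:ℝ)/2)) := by ring
    rw [this]
    nlinarith
  linarith

private theorem aux_RRm_tendsto (hcont : ContinuousOn h_r (Set.Ici 0))
    (hpos : ∀ s : ℝ, 0 ≤ s → 0 < h_r s)
    (hint1 : MeasureTheory.IntegrableOn (fun s => s * h_r s) (Set.Ioi 0))
    (hnorm : 2 * Real.pi * ∫ s in Set.Ioi (0 : ℝ), s * h_r s = 1)
    (hint2 : MeasureTheory.IntegrableOn (fun s => s ^ 2 * h_r s) (Set.Ioi 0))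
    (hPK : ∀ r : ℝ, P_K r = 2 * Real.pi * ∫ s in (0 : ℝ)..r, s * h_r s) :
    ∃ l : ℝ, Tendsto (fun q : ℝ => ∫ x in (1:ℝ)..(max 1 q), (1 + (-1) * P_K (Real.sqrt x)) / (2 * x))
      atTop (𝓝 l) := by
  refine ⟨_, tendsto_atTop_ciSup (aux_RRm_mono hcont hpos hint1 hnorm hPK) ?_⟩
  exact ⟨_, Set.forall_mem_range.2 fun q => aux_RRm_bdd hcont hpos hint1 hnorm hint2 hPK q⟩

private theorem aux_psi_log (hcont : ContinuousOn h_r (Set.Ici 0))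
    (hPK : ∀ r : ℝ, P_K r = 2 * Real.pi * ∫ s in (0 : ℝ)..r, s * h_r s)
    {q : ℝ} (hq : 1 ≤ q) :
    (∫ x in (1:ℝ)..q, (0 + 1 * P_K (Real.sqrt x)) / (2 * x))
      = (1/2) * Real.log q - ∫ x in (1:ℝ)..q, (1 + (-1) * P_K (Real.sqrt x)) / (2 * x) := by
  have hq0 : (0:ℝ) < q := lt_of_lt_of_le one_pos hq
  have hii1 := aux_fg_ii hcont hPK 0 1 one_pos hq0
  have hii2 := aux_fg_ii hcont hPK 1 (-1) one_pos hq0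
  have hsum : (∫ x in (1:ℝ)..q, (0 + 1 * P_K (Real.sqrt x)) / (2 * x))
      + (∫ x in (1:ℝ)..q, (1 + (-1) * P_K (Real.sqrt x)) / (2 * x))
      = ∫ x in (1:ℝ)..q, (1/2) * (1/x) := by
    rw [← intervalIntegral.integral_add hii1 hii2]
    apply intervalIntegral.integral_congr
    intro x hx
    have hx0 : (0:ℝ) < x := by
      rcases Set.mem_uIcc.1 hx with h | h
      · exact lt_of_lt_of_le one_pos h.1
      · exact lt_of_lt_of_le hq0 h.1
    field_simp
    ring
  have hlog : ∫ x in (1:ℝ)..q, (1/2) * (1/x) = (1/2) * Real.log q := by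
    rw [intervalIntegral.integral_const_mul, integral_one_div]
    · rw [div_one]
    · intro h
      rcases Set.mem_uIcc.1 h with h | h
      · linarith [h.1]
      · linarith [h.1, hq0]
  linarith

end AuxAnalysis

section AuxGeometry

theorem aux_rhs0 (Γ : Fin 3 → ℝ) (P_K : ℝ → ℝ) (p : Fin 3 → EuclideanSpace ℝ (Fin 2)) :
    eppvRHS Γ P_K p 0 = (-(1 / (2 * Real.pi))) •
    (((Γ 1 * P_K ‖p 0 - p 1‖) / ‖p 0 - p 1‖ ^ 2) • perp (p 0 - p 1) +
     ((Γ 2 * P_K ‖p 0 - p 2‖) / ‖p 0 - p 2‖ ^ 2) • perp (p 0 - p 2)) := by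
  rw [eppvRHS, show (Finset.univ.filter (fun m => m ≠ (0 : Fin 3))) = {1, 2} by decide]
  rw [Finset.sum_insert (by decide), Finset.sum_singleton]

theorem aux_rhs1 (Γ : Fin 3 → ℝ) (P_K : ℝ → ℝ) (p : Fin 3 → EuclideanSpace ℝ (Fin 2)) :
    eppvRHS Γ P_K p 1 = (-(1 / (2 * Real.pi))) •
    (((Γ 0 * P_K ‖p 1 - p 0‖) / ‖p 1 - p 0‖ ^ 2) • perp (p 1 - p 0) +
     ((Γ 2 * P_K ‖p 1 - p 2‖) / ‖p 1 - p 2‖ ^ 2) • perp (p 1 - p 2)) := by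
  rw [eppvRHS, show (Finset.univ.filter (fun m => m ≠ (1 : Fin 3))) = {0, 2} by decide]
  rw [Finset.sum_insert (by decide), Finset.sum_singleton]

theorem aux_rhs2 (Γ : Fin 3 → ℝ) (P_K : ℝ → ℝ) (p : Fin 3 → EuclideanSpace ℝ (Fin 2)) :
    eppvRHS Γ P_K p 2 = (-(1 / (2 * Real.pi))) •
    (((Γ 0 * P_K ‖p 2 - p 0‖) / ‖p 2 - p 0‖ ^ 2) • perp (p 2 - p 0) +
     ((Γ 1 * P_K ‖p 2 - p 1‖) / ‖p 2 - p 1‖ ^ 2) • perp (p 2 - p 1)) := by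
  rw [eppvRHS, show (Finset.univ.filter (fun m => m ≠ (2 : Fin 3))) = {0, 1} by decide]
  rw [Finset.sum_insert (by decide), Finset.sum_singleton]

theorem aux_perp0 (v : EuclideanSpace ℝ (Fin 2)) : perp v 0 = v 1 := by simp [perp]
theorem aux_perp1 (v : EuclideanSpace ℝ (Fin 2)) : perp v 1 = -(v 0) := by simp [perp]

set_option maxHeartbeats 2000000 in
open RealInnerProductSpace in
theorem aux_keyA (Γ : Fin 3 → ℝ) (P_K : ℝ → ℝ) (p : Fin 3 → EuclideanSpace ℝ (Fin 2))
    (hΓ : ∀ n, Γ n ≠ 0)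
    (h01 : ‖p 0 - p 1‖ ≠ 0) (h02 : ‖p 0 - p 2‖ ≠ 0) (h12 : ‖p 1 - p 2‖ ≠ 0) :
    (1/Γ 0) * (⟪p 1 - p 2, eppvRHS Γ P_K p 1 - eppvRHS Γ P_K p 2⟫ +
               ⟪eppvRHS Γ P_K p 1 - eppvRHS Γ P_K p 2, p 1 - p 2⟫) +
    (1/Γ 1) * (⟪p 2 - p 0, eppvRHS Γ P_K p 2 - eppvRHS Γ P_K p 0⟫ +
               ⟪eppvRHS Γ P_K p 2 - eppvRHS Γ P_K p 0, p 2 - p 0⟫) +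
    (1/Γ 2) * (⟪p 0 - p 1, eppvRHS Γ P_K p 0 - eppvRHS Γ P_K p 1⟫ +
               ⟪eppvRHS Γ P_K p 0 - eppvRHS Γ P_K p 1, p 0 - p 1⟫) = 0 := by
  have e10 : ‖p 1 - p 0‖ = ‖p 0 - p 1‖ := norm_sub_rev _ _
  have e20 : ‖p 2 - p 0‖ = ‖p 0 - p 2‖ := norm_sub_rev _ _
  have e21 : ‖p 2 - p 1‖ = ‖p 1 - p 2‖ := norm_sub_rev _ _
  rw [aux_rhs0, aux_rhs1, aux_rhs2, e10, e20, e21]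
  simp only [PiLp.inner_apply, Fin.sum_univ_two, PiLp.sub_apply, PiLp.add_apply,
    PiLp.smul_apply, aux_perp0, aux_perp1, smul_eq_mul, RCLike.inner_apply, conj_trivial,
    map_sub, map_add, map_mul]
  have hpi : Real.pi ≠ 0 := Real.pi_ne_zero
  field_simp [hΓ 0, hΓ 1, hΓ 2]
  ring

set_option maxHeartbeats 2000000 in
open RealInnerProductSpace in
theorem aux_keyB (Γ : Fin 3 → ℝ) (P_K : ℝ → ℝ) (p : Fin 3 → EuclideanSpace ℝ (Fin 2))
    (hΓ : ∀ n, Γ n ≠ 0)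
    (h01 : ‖p 0 - p 1‖ ≠ 0) (h02 : ‖p 0 - p 2‖ ≠ 0) (h12 : ‖p 1 - p 2‖ ≠ 0) :
    (1/Γ 0) * ((P_K ‖p 1 - p 2‖ / (2 * ‖p 1 - p 2‖ ^ 2)) *
              (⟪p 1 - p 2, eppvRHS Γ P_K p 1 - eppvRHS Γ P_K p 2⟫ +
               ⟪eppvRHS Γ P_K p 1 - eppvRHS Γ P_K p 2, p 1 - p 2⟫)) +
    (1/Γ 1) * ((P_K ‖p 2 - p 0‖ / (2 * ‖p 2 - p 0‖ ^ 2)) *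
              (⟪p 2 - p 0, eppvRHS Γ P_K p 2 - eppvRHS Γ P_K p 0⟫ +
               ⟪eppvRHS Γ P_K p 2 - eppvRHS Γ P_K p 0, p 2 - p 0⟫)) +
    (1/Γ 2) * ((P_K ‖p 0 - p 1‖ / (2 * ‖p 0 - p 1‖ ^ 2)) *
              (⟪p 0 - p 1, eppvRHS Γ P_K p 0 - eppvRHS Γ P_K p 1⟫ +
               ⟪eppvRHS Γ P_K p 0 - eppvRHS Γ P_K p 1, p 0 - p 1⟫)) = 0 := by
  have e10 : ‖p 1 - p 0‖ = ‖p 0 - p 1‖ := norm_sub_rev _ _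
  have e20 : ‖p 2 - p 0‖ = ‖p 0 - p 2‖ := norm_sub_rev _ _
  have e21 : ‖p 2 - p 1‖ = ‖p 1 - p 2‖ := norm_sub_rev _ _
  rw [aux_rhs0, aux_rhs1, aux_rhs2, e10, e20, e21]
  simp only [PiLp.inner_apply, Fin.sum_univ_two, PiLp.sub_apply, PiLp.add_apply,
    PiLp.smul_apply, aux_perp0, aux_perp1, smul_eq_mul, RCLike.inner_apply, conj_trivial,
    map_sub, map_add, map_mul]
  have hpi : Real.pi ≠ 0 := Real.pi_ne_zero
  field_simp [hΓ 0, hΓ 1, hΓ 2]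
  ring

end AuxGeometry

section AuxODE

variable {h_r : ℝ → ℝ} {Γ : Fin 3 → ℝ} {P_K : ℝ → ℝ} {X : Fin 3 → ℝ → EuclideanSpace ℝ (Fin 2)}

open RealInnerProductSpace in
theorem aux_nsq_hasDeriv (hX : IsEPPVSolution Γ P_K Set.univ X) (i j : Fin 3) (t : ℝ) :
    HasDerivAt (fun s => ‖X i s - X j s‖ ^ 2)
      (⟪X i t - X j t, eppvRHS Γ P_K (fun m => X m t) i - eppvRHS Γ P_K (fun m => X m t) j⟫ +
       ⟪eppvRHS Γ P_K (fun m => X m t) i - eppvRHS Γ P_K (fun m => X m t) j, X i t - X j t⟫) t := by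
  have hi : HasDerivAt (X i) (eppvRHS Γ P_K (fun m => X m t) i) t := by
    have := hX.2 i t (Set.mem_univ t)
    rwa [hasDerivWithinAt_univ] at this
  have hj : HasDerivAt (X j) (eppvRHS Γ P_K (fun m => X m t) j) t := by
    have := hX.2 j t (Set.mem_univ t)
    rwa [hasDerivWithinAt_univ] at this
  have hsub := hi.sub hj
  have hinner := (HasDerivAt.inner ℝ hsub hsub)
  have heq : (fun s => ⟪X i s - X j s, X i s - X j s⟫) = fun s => ‖X i s - X j s‖ ^ 2 := by
    funext s
    exact real_inner_self_eq_norm_sq _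
  simp only [Pi.sub_apply] at hinner
  rw [heq] at hinner
  exact hinner

theorem aux_KK_const (hX : IsEPPVSolution Γ P_K Set.univ X) (hΓ : ∀ n, Γ n ≠ 0) (t : ℝ) :
    (1/Γ 0) * ‖X 1 t - X 2 t‖ ^ 2 + (1/Γ 1) * ‖X 2 t - X 0 t‖ ^ 2
      + (1/Γ 2) * ‖X 0 t - X 1 t‖ ^ 2
    = (1/Γ 0) * ‖X 1 0 - X 2 0‖ ^ 2 + (1/Γ 1) * ‖X 2 0 - X 0 0‖ ^ 2
      + (1/Γ 2) * ‖X 0 0 - X 1 0‖ ^ 2 := by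
  have hsep : ∀ (i j : Fin 3), i ≠ j → ∀ s : ℝ, ‖X i s - X j s‖ ≠ 0 := by
    intro i j hij s
    rw [norm_ne_zero_iff, sub_ne_zero]
    exact hX.1 i j hij s (Set.mem_univ s)
  have hd : ∀ s : ℝ, HasDerivAt (fun u => (1/Γ 0) * ‖X 1 u - X 2 u‖ ^ 2
      + (1/Γ 1) * ‖X 2 u - X 0 u‖ ^ 2 + (1/Γ 2) * ‖X 0 u - X 1 u‖ ^ 2) 0 s := by
    intro s
    have h0 := (aux_nsq_hasDeriv hX 1 2 s).const_mul (1/Γ 0)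
    have h1 := (aux_nsq_hasDeriv hX 2 0 s).const_mul (1/Γ 1)
    have h2 := (aux_nsq_hasDeriv hX 0 1 s).const_mul (1/Γ 2)
    have hsum := (h0.add h1).add h2
    have := aux_keyA Γ P_K (fun m => X m s) hΓ (hsep 0 1 (by decide) s)
      (hsep 0 2 (by decide) s) (hsep 1 2 (by decide) s)
    rw [this] at hsum
    exact hsum
  have hdiff : Differentiable ℝ (fun u => (1/Γ 0) * ‖X 1 u - X 2 u‖ ^ 2
      + (1/Γ 1) * ‖X 2 u - X 0 u‖ ^ 2 + (1/Γ 2) * ‖X 0 u - X 1 u‖ ^ 2) :=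
    fun s => (hd s).differentiableAt
  exact is_const_of_deriv_eq_zero hdiff (fun s => (hd s).deriv) t 0

open RealInnerProductSpace in
theorem aux_psi_comp_hasDeriv (hcont : ContinuousOn h_r (Set.Ici 0))
    (hPK : ∀ r : ℝ, P_K r = 2 * Real.pi * ∫ s in (0 : ℝ)..r, s * h_r s)
    (hX : IsEPPVSolution Γ P_K Set.univ X) (i j : Fin 3) (hij : i ≠ j) (t : ℝ) :
    HasDerivAt (fun s => ∫ x in (1:ℝ)..(‖X i s - X j s‖ ^ 2), (0 + 1 * P_K (Real.sqrt x)) / (2 * x))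
      ((P_K ‖X i t - X j t‖ / (2 * ‖X i t - X j t‖ ^ 2)) *
       (⟪X i t - X j t, eppvRHS Γ P_K (fun m => X m t) i - eppvRHS Γ P_K (fun m => X m t) j⟫ +
        ⟪eppvRHS Γ P_K (fun m => X m t) i - eppvRHS Γ P_K (fun m => X m t) j, X i t - X j t⟫)) t := by
  have hne : X i t - X j t ≠ 0 := sub_ne_zero.2 (hX.1 i j hij t (Set.mem_univ t))
  have hq : (0:ℝ) < ‖X i t - X j t‖ ^ 2 := by have := norm_pos_iff.2 hne; positivity
  have hcomp := (aux_psi_hasDeriv hcont hPK hq).comp t (aux_nsq_hasDeriv hX i j t)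
  have hsqrt : Real.sqrt (‖X i t - X j t‖ ^ 2) = ‖X i t - X j t‖ :=
    Real.sqrt_sq (norm_nonneg _)
  rw [hsqrt] at hcomp
  refine hcomp.congr_deriv ?_
  ring

theorem aux_hh_const (hcont : ContinuousOn h_r (Set.Ici 0))
    (hPK : ∀ r : ℝ, P_K r = 2 * Real.pi * ∫ s in (0 : ℝ)..r, s * h_r s)
    (hX : IsEPPVSolution Γ P_K Set.univ X) (hΓ : ∀ n, Γ n ≠ 0) (t : ℝ) :
    (1/Γ 0) * (∫ x in (1:ℝ)..(‖X 1 t - X 2 t‖ ^ 2), (0 + 1 * P_K (Real.sqrt x)) / (2 * x)) +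
    (1/Γ 1) * (∫ x in (1:ℝ)..(‖X 2 t - X 0 t‖ ^ 2), (0 + 1 * P_K (Real.sqrt x)) / (2 * x)) +
    (1/Γ 2) * (∫ x in (1:ℝ)..(‖X 0 t - X 1 t‖ ^ 2), (0 + 1 * P_K (Real.sqrt x)) / (2 * x)) =
    (1/Γ 0) * (∫ x in (1:ℝ)..(‖X 1 0 - X 2 0‖ ^ 2), (0 + 1 * P_K (Real.sqrt x)) / (2 * x)) +
    (1/Γ 1) * (∫ x in (1:ℝ)..(‖X 2 0 - X 0 0‖ ^ 2), (0 + 1 * P_K (Real.sqrt x)) / (2 * x)) +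
    (1/Γ 2) * (∫ x in (1:ℝ)..(‖X 0 0 - X 1 0‖ ^ 2), (0 + 1 * P_K (Real.sqrt x)) / (2 * x)) := by
  have hsep : ∀ (i j : Fin 3), i ≠ j → ∀ s : ℝ, ‖X i s - X j s‖ ≠ 0 := by
    intro i j hij s
    rw [norm_ne_zero_iff, sub_ne_zero]
    exact hX.1 i j hij s (Set.mem_univ s)
  have hd : ∀ s : ℝ, HasDerivAt (fun u =>
      (1/Γ 0) * (∫ x in (1:ℝ)..(‖X 1 u - X 2 u‖ ^ 2), (0 + 1 * P_K (Real.sqrt x)) / (2 * x)) +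
      (1/Γ 1) * (∫ x in (1:ℝ)..(‖X 2 u - X 0 u‖ ^ 2), (0 + 1 * P_K (Real.sqrt x)) / (2 * x)) +
      (1/Γ 2) * (∫ x in (1:ℝ)..(‖X 0 u - X 1 u‖ ^ 2), (0 + 1 * P_K (Real.sqrt x)) / (2 * x))) 0 s := by
    intro s
    have h0 := (aux_psi_comp_hasDeriv hcont hPK hX 1 2 (by decide) s).const_mul (1/Γ 0)
    have h1 := (aux_psi_comp_hasDeriv hcont hPK hX 2 0 (by decide) s).const_mul (1/Γ 1)
    have h2 := (aux_psi_comp_hasDeriv hcont hPK hX 0 1 (by decide) s).const_mul (1/Γ 2)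
    have hsum := (h0.add h1).add h2
    have := aux_keyB Γ P_K (fun m => X m s) hΓ (hsep 0 1 (by decide) s)
      (hsep 0 2 (by decide) s) (hsep 1 2 (by decide) s)
    rw [this] at hsum
    exact hsum
  have hdiff : Differentiable ℝ _ := fun s => (hd s).differentiableAt
  exact is_const_of_deriv_eq_zero hdiff (fun s => (hd s).deriv) t 0

end AuxODE

section AuxEnd

theorem aux_case_lemma (α β γ K₀ L₀ : ℝ) (hα : α ≠ 0) (F : Filter ℝ) [hF : F.NeBot]
    (a b c : ℝ → ℝ)
    (ha0 : ∀ᶠ t in F, 0 < a t) (hb0 : ∀ᶠ t in F, 0 < b t) (hc0 : ∀ᶠ t in F, 0 < c t)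
    (haT : Tendsto a F atTop) (hcT : Tendsto c F atTop)
    (htri : ∀ᶠ t in F, |b t - c t| ≤ a t)
    (hsmall : Tendsto (fun t => a t / c t) F (𝓝 0))
    (hK : ∀ᶠ t in F, α * (a t)^2 + β * (b t)^2 + γ * (c t)^2 = K₀)
    (hW : Tendsto (fun t => α * Real.log (a t) + β * Real.log (b t) + γ * Real.log (c t))
      F (𝓝 L₀)) : False := by
  have hbc : Tendsto (fun t => b t / c t) F (𝓝 1) := by
    rw [tendsto_iff_dist_tendsto_zero]
    apply squeeze_zero' (Eventually.of_forall fun t => dist_nonneg) _ hsmall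
    filter_upwards [hb0, hc0, htri] with t hb hc ht
    have hcne : c t ≠ 0 := hc.ne'
    calc dist (b t / c t) 1 = |b t / c t - 1| := Real.dist_eq _ _
      _ = |(b t - c t) / c t| := by
          congr 1
          field_simp
      _ = |b t - c t| / c t := by rw [abs_div, abs_of_pos hc]
      _ ≤ a t / c t := by gcongr
  have hcsq : Tendsto (fun t => K₀ / (c t)^2) F (𝓝 0) := by
    have h2 : Tendsto (fun t => (c t)^2) F atTop := (hcT.atTop_mul_atTop₀ hcT).congr (by
      intro t; rw [sq])
    have := h2.inv_tendsto_atTop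
    have h3 : Tendsto (fun t => K₀ * ((c t)^2)⁻¹) F (𝓝 (K₀ * 0)) := this.const_mul K₀
    simpa [div_eq_mul_inv] using h3
  have hac : Tendsto (fun t => a t / c t) F (𝓝 0) := hsmall
  have hlim : Tendsto (fun t => α * (a t / c t)^2 + β * (b t / c t)^2 + γ) F
      (𝓝 (α * 0^2 + β * 1^2 + γ)) := by
    exact (((hac.pow 2).const_mul α).add ((hbc.pow 2).const_mul β)).add tendsto_const_nhds
  have heq : ∀ᶠ t in F, α * (a t / c t)^2 + β * (b t / c t)^2 + γ = K₀ / (c t)^2 := by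
    filter_upwards [hc0, hK] with t hc hKt
    have hcne : c t ≠ 0 := hc.ne'
    field_simp
    linarith [hKt]
  have hbg : β + γ = 0 := by
    have := tendsto_nhds_unique (hlim.congr' heq) hcsq
    nlinarith [this]
  have hlogbc : Tendsto (fun t => Real.log (b t / c t)) F (𝓝 0) := by
    have := hbc.log one_ne_zero
    simpa using this
  have hWa : Tendsto (fun t => α * Real.log (a t)) F (𝓝 L₀) := by
    have hcongr : ∀ᶠ t in F,
        (α * Real.log (a t) + β * Real.log (b t) + γ * Real.log (c t))
          - β * Real.log (b t / c t) = α * Real.log (a t) := by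
      filter_upwards [hb0, hc0] with t hb hc
      rw [Real.log_div hb.ne' hc.ne']
      have : γ = -β := by linarith
      rw [this]; ring
    have h2 := (hW.sub (hlogbc.const_mul β)).congr' hcongr
    simpa using h2
  have hloga : Tendsto (fun t => Real.log (a t)) F (𝓝 (L₀ / α)) := by
    have := hWa.const_mul (1/α)
    have h2 : (fun t => (1/α) * (α * Real.log (a t))) = fun t => Real.log (a t) := by
      funext t; field_simp
    rw [h2] at this
    convert this using 2
    field_simp [mul_comm]
  have hlogaT : Tendsto (fun t => Real.log (a t)) F atTop := Real.tendsto_log_atTop.comp haT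
  exact not_tendsto_nhds_of_tendsto_atTop hlogaT _ hloga

theorem aux_helper_lemma (K₀ L₀ : ℝ) (mm M ρ : ℝ → ℝ)
    (hρdef : ∀ t, ρ t = mm t / M t)
    (hM0 : ∀ t, 0 < M t)
    (α' β' γ' : ℝ) (a' b' c' : ℝ → ℝ) (hα' : α' ≠ 0)
    (hpos' : ∀ t, 0 < a' t ∧ 0 < b' t ∧ 0 < c' t)
    (htri' : ∀ t, |b' t - c' t| ≤ a' t)
    (haT' : Tendsto a' atTop atTop) (hcT' : Tendsto c' atTop atTop)
    (hK' : ∀ t, α' * (a' t)^2 + β' * (b' t)^2 + γ' * (c' t)^2 = K₀)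
    (hW' : Tendsto (fun t => α' * Real.log (a' t) + β' * Real.log (b' t) + γ' * Real.log (c' t))
      atTop (𝓝 L₀))
    (hρ0' : Tendsto ρ atTop (𝓝 0))
    (hMdef : ∀ t, M t = max (a' t) (max (b' t) (c' t)))
    (hmmdef : ∀ t, mm t = min (a' t) (min (b' t) (c' t)))
    (hNB : (atTop ⊓ Filter.principal {t | a' t ≤ b' t ∧ a' t ≤ c' t}).NeBot) :
    False := by
  set F := atTop ⊓ Filter.principal {t | a' t ≤ b' t ∧ a' t ≤ c' t} with hF
  have hmem : ∀ᶠ t in F, a' t ≤ b' t ∧ a' t ≤ c' t :=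
    eventually_inf_principal.2 (Eventually.of_forall fun t ht => ht)
  have hsmall : Tendsto (fun t => a' t / c' t) F (𝓝 0) := by
    have hle : ∀ᶠ t in F, a' t / c' t ≤ 2 * ρ t := by
      filter_upwards [hmem] with t ht
      obtain ⟨ha0, hb0, hc0⟩ := hpos' t
      have hmmt : mm t = a' t := by
        rw [hmmdef t, min_eq_left (le_min ht.1 ht.2)]
      have hMc : M t ≤ 2 * c' t := by
        rw [hMdef t]
        have h1 : b' t ≤ a' t + c' t := by
          have := htri' t; rw [abs_sub_le_iff] at this; linarith [this.1]
        apply max_le (by linarith [ht.2]) (max_le (by linarith [ht.2]) (by linarith))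
      have hcM : c' t ≤ M t := by
        rw [hMdef t]; exact le_trans (le_max_right _ _) (le_max_right _ _)
      rw [hρdef t, hmmt]
      rw [div_le_iff₀ hc0, mul_comm (2:ℝ), mul_assoc, div_mul_eq_mul_div, le_div_iff₀ (hM0 t)]
      nlinarith [ht.2, (hM0 t).le]
    apply squeeze_zero' _ hle
    · have h2 : Tendsto (fun t => 2 * ρ t) F (𝓝 (2 * 0)) :=
        (hρ0'.mono_left inf_le_left).const_mul 2
      simpa using h2
    · filter_upwards with t
      exact div_nonneg (hpos' t).1.le (hpos' t).2.2.le
  haveI := hNB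
  exact aux_case_lemma α' β' γ' K₀ L₀ hα' F a' b' c'
    (Eventually.of_forall fun t => (hpos' t).1)
    (Eventually.of_forall fun t => (hpos' t).2.1)
    (Eventually.of_forall fun t => (hpos' t).2.2)
    (haT'.mono_left inf_le_left) (hcT'.mono_left inf_le_left)
    (Eventually.of_forall htri') hsmall
    (Eventually.of_forall hK') (hW'.mono_left inf_le_left)

theorem aux_end_lemma (α β γ K₀ L₀ : ℝ) (hα : α ≠ 0) (hβ : β ≠ 0) (hγ : γ ≠ 0)
    (a b c : ℝ → ℝ)
    (hpos : ∀ t, 0 < a t ∧ 0 < b t ∧ 0 < c t)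
    (htri : ∀ t, a t ≤ b t + c t ∧ b t ≤ a t + c t ∧ c t ≤ a t + b t)
    (haT : Tendsto a atTop atTop) (hbT : Tendsto b atTop atTop) (hcT : Tendsto c atTop atTop)
    (hK : ∀ t, α * (a t)^2 + β * (b t)^2 + γ * (c t)^2 = K₀)
    (hW : Tendsto (fun t => α * Real.log (a t) + β * Real.log (b t) + γ * Real.log (c t))
      atTop (𝓝 L₀)) :
    α + β + γ = 0 := by
  set M : ℝ → ℝ := fun t => max (a t) (max (b t) (c t)) with hM
  set mm : ℝ → ℝ := fun t => min (a t) (min (b t) (c t)) with hmm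
  set ρ : ℝ → ℝ := fun t => mm t / M t with hρdef
  have hM0 : ∀ t, 0 < M t := fun t => lt_of_lt_of_le (hpos t).1 (le_max_left _ _)
  have hmm0 : ∀ t, 0 < mm t := fun t =>
    lt_min (hpos t).1 (lt_min (hpos t).2.1 (hpos t).2.2)
  by_cases hρ0 : Tendsto ρ atTop (𝓝 0)
  · exfalso
    have habs : ∀ t, |b t - c t| ≤ a t ∧ |c t - a t| ≤ b t ∧ |a t - b t| ≤ c t := by
      intro t
      obtain ⟨h1, h2, h3⟩ := htri t
      refine ⟨abs_sub_le_iff.2 ⟨by linarith, by linarith⟩,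
        abs_sub_le_iff.2 ⟨by linarith, by linarith⟩,
        abs_sub_le_iff.2 ⟨by linarith, by linarith⟩⟩
    by_cases h1 : (atTop ⊓ Filter.principal {t | a t ≤ b t ∧ a t ≤ c t}).NeBot
    · exact aux_helper_lemma K₀ L₀ mm M ρ (fun t => rfl) hM0 α β γ a b c hα hpos
        (fun t => (habs t).1) haT hcT hK hW hρ0 (fun t => rfl) (fun t => rfl) h1
    by_cases h2 : (atTop ⊓ Filter.principal {t | b t ≤ c t ∧ b t ≤ a t}).NeBot
    · apply aux_helper_lemma K₀ L₀ mm M ρ (fun t => rfl) hM0 β γ α b c a hβ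
        (fun t => ⟨(hpos t).2.1, (hpos t).2.2, (hpos t).1⟩)
        (fun t => (habs t).2.1) hbT haT
        (fun t => by linarith [hK t])
        (hW.congr fun t => by ring) hρ0
        (fun t => by simp only [hM]; rw [sup_left_comm, sup_comm (a t) (c t)])
        (fun t => by simp only [hmm]; rw [inf_left_comm, inf_comm (a t) (c t)])
        h2
    by_cases h3 : (atTop ⊓ Filter.principal {t | c t ≤ a t ∧ c t ≤ b t}).NeBot
    · apply aux_helper_lemma K₀ L₀ mm M ρ (fun t => rfl) hM0 γ α β c a b hγ
        (fun t => ⟨(hpos t).2.2, (hpos t).1, (hpos t).2.1⟩)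
        (fun t => (habs t).2.2) hcT hbT
        (fun t => by linarith [hK t])
        (hW.congr fun t => by ring) hρ0
        (fun t => by simp only [hM]; rw [sup_comm (b t) (c t), sup_left_comm])
        (fun t => by simp only [hmm]; rw [inf_comm (b t) (c t), inf_left_comm])
        h3
    · rw [Filter.not_neBot, inf_principal_eq_bot] at h1 h2 h3
      have hmemi := Filter.inter_mem h1 (Filter.inter_mem h2 h3)
      obtain ⟨t, ht1, ht2, ht3⟩ := Filter.nonempty_of_mem hmemi
      simp only [Set.mem_compl_iff, Set.mem_setOf_eq] at ht1 ht2 ht3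
      rcases le_total (a t) (b t) with hab | hab <;>
        rcases le_total (b t) (c t) with hbc | hbc <;>
        rcases le_total (a t) (c t) with hac | hac <;>
        first
        | exact ht1 ⟨by linarith, by linarith⟩
        | exact ht2 ⟨by linarith, by linarith⟩
        | exact ht3 ⟨by linarith, by linarith⟩
  · by_contra hΛ
    rw [Metric.tendsto_nhds] at hρ0
    push_neg at hρ0
    obtain ⟨ε, hε, hfreq⟩ := hρ0
    have hfreq : ∃ᶠ x in atTop, ¬ dist (ρ x) 0 < ε := hfreq.mono fun x hx => not_lt.2 hx
    have hfreq' : ∃ᶠ t in atTop, ε ≤ ρ t := by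
      apply hfreq.mono
      intro t ht
      have : dist (ρ t) 0 = |ρ t| := by simp [Real.dist_eq]
      rw [this, abs_of_pos (div_pos (hmm0 t) (hM0 t))] at ht
      linarith [not_lt.1 ht]
    rw [frequently_iff_neBot] at hfreq'
    set F' := atTop ⊓ Filter.principal {t | ε ≤ ρ t} with hF'
    haveI : F'.NeBot := hfreq'
    have hmem : ∀ᶠ t in F', ε ≤ ρ t :=
      eventually_inf_principal.2 (Eventually.of_forall fun t ht => ht)
    set C := (|α| + |β| + |γ|) * |Real.log ε| with hC
    have hbound : ∀ᶠ t in F',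
        |(α * Real.log (a t) + β * Real.log (b t) + γ * Real.log (c t))
          - (α + β + γ) * Real.log (M t)| ≤ C := by
      filter_upwards [hmem] with t ht
      have key : ∀ x : ℝ, 0 < x → mm t ≤ x → x ≤ M t →
          |Real.log x - Real.log (M t)| ≤ |Real.log ε| := by
        intro x hx hmx hxM
        have h1 : Real.log x ≤ Real.log (M t) := Real.log_le_log hx hxM
        have h2 : Real.log ε + Real.log (M t) ≤ Real.log x := by
          rw [← Real.log_mul (ne_of_gt hε) (hM0 t).ne']
          apply Real.log_le_log (mul_pos hε (hM0 t))
          calc ε * M t ≤ ρ t * M t := by nlinarith [(hM0 t).le]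
            _ = mm t := div_mul_cancel₀ _ (hM0 t).ne'
            _ ≤ x := hmx
        rw [abs_le]
        constructor
        · have : -(|Real.log ε|) ≤ Real.log ε := neg_abs_le _
          linarith
        · have h0 : (0:ℝ) ≤ |Real.log ε| := abs_nonneg _
          linarith
      obtain ⟨hpa, hpb, hpc⟩ := hpos t
      have ka := key (a t) hpa (min_le_left _ _) (le_max_left _ _)
      have kb := key (b t) hpb (le_trans (min_le_right _ _) (min_le_left _ _))
        (le_trans (le_max_left _ _) (le_max_right _ _))
      have kc := key (c t) hpc (le_trans (min_le_right _ _) (min_le_right _ _))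
        (le_trans (le_max_right _ _) (le_max_right _ _))
      have expand : (α * Real.log (a t) + β * Real.log (b t) + γ * Real.log (c t))
          - (α + β + γ) * Real.log (M t)
          = α * (Real.log (a t) - Real.log (M t)) + β * (Real.log (b t) - Real.log (M t))
            + γ * (Real.log (c t) - Real.log (M t)) := by ring
      rw [expand, hC]
      calc |α * (Real.log (a t) - Real.log (M t)) + β * (Real.log (b t) - Real.log (M t))
            + γ * (Real.log (c t) - Real.log (M t))|
          ≤ |α * (Real.log (a t) - Real.log (M t))| + |β * (Real.log (b t) - Real.log (M t))|
            + |γ * (Real.log (c t) - Real.log (M t))| := by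
            exact (abs_add_le _ _).trans (by gcongr; exact abs_add_le _ _)
        _ ≤ |α| * |Real.log ε| + |β| * |Real.log ε| + |γ| * |Real.log ε| := by
            rw [abs_mul, abs_mul, abs_mul]
            gcongr
        _ = (|α| + |β| + |γ|) * |Real.log ε| := by ring
    have hWF' : Tendsto (fun t => α * Real.log (a t) + β * Real.log (b t)
        + γ * Real.log (c t)) F' (𝓝 L₀) := hW.mono_left inf_le_left
    have hWbd : ∀ᶠ t in F', |α * Real.log (a t) + β * Real.log (b t)
        + γ * Real.log (c t)| ≤ |L₀| + 1 := by
      have hball := hWF'.eventually (Metric.ball_mem_nhds L₀ one_pos |> eventually_mem_set.2)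
      filter_upwards [hball] with t ht
      rw [Metric.mem_ball, Real.dist_eq] at ht
      calc |α * Real.log (a t) + β * Real.log (b t) + γ * Real.log (c t)|
          = |(α * Real.log (a t) + β * Real.log (b t) + γ * Real.log (c t) - L₀) + L₀| := by
            ring_nf
        _ ≤ |α * Real.log (a t) + β * Real.log (b t) + γ * Real.log (c t) - L₀| + |L₀| :=
            abs_add_le _ _
        _ ≤ |L₀| + 1 := by linarith
    have hMT : Tendsto (fun t => Real.log (M t)) F' atTop := by
      apply Real.tendsto_log_atTop.comp
      apply tendsto_atTop_mono (fun t => le_max_left (a t) (max (b t) (c t)))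
        (haT.mono_left inf_le_left)
    have hArg : ∀ᶠ t in F', (C + |L₀| + 1 + 1) / |α + β + γ| < Real.log (M t) :=
      hMT.eventually_gt_atTop _
    have : ∀ᶠ t in F', False := by
      filter_upwards [hbound, hWbd, hArg] with t h1 h2 h3
      have hΛpos : 0 < |α + β + γ| := abs_pos.2 hΛ
      rw [div_lt_iff₀ hΛpos, mul_comm] at h3
      have h4 : |(α + β + γ) * Real.log (M t)| = |α + β + γ| * |Real.log (M t)| := abs_mul _ _
      have h5 : Real.log (M t) ≤ |Real.log (M t)| := le_abs_self _
      have h6 : |(α + β + γ) * Real.log (M t)|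
          ≤ |(α * Real.log (a t) + β * Real.log (b t) + γ * Real.log (c t))
            - (α + β + γ) * Real.log (M t)|
            + |α * Real.log (a t) + β * Real.log (b t) + γ * Real.log (c t)| := by
        have := abs_sub_abs_le_abs_sub ((α + β + γ) * Real.log (M t))
          (α * Real.log (a t) + β * Real.log (b t) + γ * Real.log (c t))
        have h7 := abs_sub_comm ((α + β + γ) * Real.log (M t))
          (α * Real.log (a t) + β * Real.log (b t) + γ * Real.log (c t))
        linarith [abs_nonneg ((α + β + γ) * Real.log (M t)
          - (α * Real.log (a t) + β * Real.log (b t) + γ * Real.log (c t)))]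
      have h9 := mul_le_mul_of_nonneg_left h5 hΛpos.le
      linarith [h1, h2, h3, h6, h9, h4.ge, h4.le]
    exact this.exists.elim (fun t ht => ht)

end AuxEnd

open Filter in
/-- necessity of the collapse condition. Let `P_K` arise from a
positive continuous radial profile `h_r` with `2π ∫₀^∞ s h_r(s) ds = 1` and finite
second moment, via `P_K(r) = 2π ∫₀^r s h_r(s) ds`. If a global solution of the
three-vortex EP-PV system has all mutual distances tending to `∞` as `t → ±∞`,
then `1/Γ₁ + 1/Γ₂ + 1/Γ₃ = 0`. -/
theorem eppv_collapse_condition_necessary (h_r : ℝ → ℝ)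
    (hcont : ContinuousOn h_r (Set.Ici 0))
    (hpos : ∀ s : ℝ, 0 ≤ s → 0 < h_r s)
    (hint1 : MeasureTheory.IntegrableOn (fun s => s * h_r s) (Set.Ioi 0))
    (hnorm : 2 * Real.pi * ∫ s in Set.Ioi (0 : ℝ), s * h_r s = 1)
    (hint2 : MeasureTheory.IntegrableOn (fun s => s ^ 2 * h_r s) (Set.Ioi 0))
    (P_K : ℝ → ℝ)
    (hPK : ∀ r : ℝ, P_K r = 2 * Real.pi * ∫ s in (0 : ℝ)..r, s * h_r s)
    (Γ : Fin 3 → ℝ) (hΓ : ∀ n, Γ n ≠ 0)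
    (X : Fin 3 → ℝ → EuclideanSpace ℝ (Fin 2))
    (hX : IsEPPVSolution Γ P_K Set.univ X)
    (hgrow : ∀ m n : Fin 3, m ≠ n →
      Tendsto (fun t => ‖X m t - X n t‖) atTop atTop ∧
      Tendsto (fun t => ‖X m t - X n t‖) atBot atTop) :
    1 / Γ 0 + 1 / Γ 1 + 1 / Γ 2 = 0 := by
  have hsep : ∀ (i j : Fin 3), i ≠ j → ∀ t : ℝ, X i t ≠ X j t :=
    fun i j hij t => hX.1 i j hij t (Set.mem_univ t)
  have hposd : ∀ t : ℝ, 0 < ‖X 1 t - X 2 t‖ ∧ 0 < ‖X 2 t - X 0 t‖ ∧ 0 < ‖X 0 t - X 1 t‖ :=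
    fun t => ⟨norm_pos_iff.2 (sub_ne_zero.2 (hsep 1 2 (by decide) t)),
      norm_pos_iff.2 (sub_ne_zero.2 (hsep 2 0 (by decide) t)),
      norm_pos_iff.2 (sub_ne_zero.2 (hsep 0 1 (by decide) t))⟩
  have htri : ∀ t : ℝ, ‖X 1 t - X 2 t‖ ≤ ‖X 2 t - X 0 t‖ + ‖X 0 t - X 1 t‖ ∧
      ‖X 2 t - X 0 t‖ ≤ ‖X 1 t - X 2 t‖ + ‖X 0 t - X 1 t‖ ∧
      ‖X 0 t - X 1 t‖ ≤ ‖X 1 t - X 2 t‖ + ‖X 2 t - X 0 t‖ := by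
    intro t
    refine ⟨?_, ?_, ?_⟩
    · calc ‖X 1 t - X 2 t‖ = ‖(X 1 t - X 0 t) + (X 0 t - X 2 t)‖ := by
            congr 1; abel
        _ ≤ ‖X 1 t - X 0 t‖ + ‖X 0 t - X 2 t‖ := norm_add_le _ _
        _ = ‖X 2 t - X 0 t‖ + ‖X 0 t - X 1 t‖ := by
            rw [norm_sub_rev (X 1 t) (X 0 t), norm_sub_rev (X 0 t) (X 2 t)]
            exact add_comm _ _
    · calc ‖X 2 t - X 0 t‖ = ‖(X 2 t - X 1 t) + (X 1 t - X 0 t)‖ := by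
            congr 1; abel
        _ ≤ ‖X 2 t - X 1 t‖ + ‖X 1 t - X 0 t‖ := norm_add_le _ _
        _ = ‖X 1 t - X 2 t‖ + ‖X 0 t - X 1 t‖ := by
            rw [norm_sub_rev (X 2 t) (X 1 t), norm_sub_rev (X 1 t) (X 0 t)]
    · calc ‖X 0 t - X 1 t‖ = ‖(X 0 t - X 2 t) + (X 2 t - X 1 t)‖ := by
            congr 1; abel
        _ ≤ ‖X 0 t - X 2 t‖ + ‖X 2 t - X 1 t‖ := norm_add_le _ _
        _ = ‖X 1 t - X 2 t‖ + ‖X 2 t - X 0 t‖ := by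
            rw [norm_sub_rev (X 0 t) (X 2 t), norm_sub_rev (X 2 t) (X 1 t)]
            exact add_comm _ _
  have haT : Tendsto (fun t => ‖X 1 t - X 2 t‖) atTop atTop := (hgrow 1 2 (by decide)).1
  have hbT : Tendsto (fun t => ‖X 2 t - X 0 t‖) atTop atTop := (hgrow 2 0 (by decide)).1
  have hcT : Tendsto (fun t => ‖X 0 t - X 1 t‖) atTop atTop := (hgrow 0 1 (by decide)).1
  -- squared distances tend to infinity
  have hq1 : Tendsto (fun t => ‖X 1 t - X 2 t‖ ^ 2) atTop atTop :=
    (haT.atTop_mul_atTop₀ haT).congr (fun t => (sq _).symm)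
  have hq2 : Tendsto (fun t => ‖X 2 t - X 0 t‖ ^ 2) atTop atTop :=
    (hbT.atTop_mul_atTop₀ hbT).congr (fun t => (sq _).symm)
  have hq3 : Tendsto (fun t => ‖X 0 t - X 1 t‖ ^ 2) atTop atTop :=
    (hcT.atTop_mul_atTop₀ hcT).congr (fun t => (sq _).symm)
  -- the limit of the tail correction
  obtain ⟨RR, hRR⟩ := aux_RRm_tendsto hcont hpos hint1 hnorm hint2 hPK
  -- conserved quantity for the logarithmic sum
  have hW : Tendsto (fun t => (1/Γ 0) * Real.log ‖X 1 t - X 2 t‖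
      + (1/Γ 1) * Real.log ‖X 2 t - X 0 t‖ + (1/Γ 2) * Real.log ‖X 0 t - X 1 t‖) atTop
      (𝓝 (((1/Γ 0) * (∫ x in (1:ℝ)..(‖X 1 0 - X 2 0‖ ^ 2), (0 + 1 * P_K (Real.sqrt x)) / (2 * x)) +
    (1/Γ 1) * (∫ x in (1:ℝ)..(‖X 2 0 - X 0 0‖ ^ 2), (0 + 1 * P_K (Real.sqrt x)) / (2 * x)) +
    (1/Γ 2) * (∫ x in (1:ℝ)..(‖X 0 0 - X 1 0‖ ^ 2), (0 + 1 * P_K (Real.sqrt x)) / (2 * x)))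
        + ((1/Γ 0) * RR + (1/Γ 1) * RR + (1/Γ 2) * RR))) := by
    have hWt : Tendsto (fun t =>
        ((1/Γ 0) * (∫ x in (1:ℝ)..(‖X 1 0 - X 2 0‖ ^ 2), (0 + 1 * P_K (Real.sqrt x)) / (2 * x)) +
         (1/Γ 1) * (∫ x in (1:ℝ)..(‖X 2 0 - X 0 0‖ ^ 2), (0 + 1 * P_K (Real.sqrt x)) / (2 * x)) +
         (1/Γ 2) * (∫ x in (1:ℝ)..(‖X 0 0 - X 1 0‖ ^ 2), (0 + 1 * P_K (Real.sqrt x)) / (2 * x)))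
        + ((1/Γ 0) * (∫ x in (1:ℝ)..(max 1 (‖X 1 t - X 2 t‖ ^ 2)), (1 + (-1) * P_K (Real.sqrt x)) / (2 * x))
         + (1/Γ 1) * (∫ x in (1:ℝ)..(max 1 (‖X 2 t - X 0 t‖ ^ 2)), (1 + (-1) * P_K (Real.sqrt x)) / (2 * x))
         + (1/Γ 2) * (∫ x in (1:ℝ)..(max 1 (‖X 0 t - X 1 t‖ ^ 2)), (1 + (-1) * P_K (Real.sqrt x)) / (2 * x)))) atTop
        (𝓝 (((1/Γ 0) * (∫ x in (1:ℝ)..(‖X 1 0 - X 2 0‖ ^ 2), (0 + 1 * P_K (Real.sqrt x)) / (2 * x)) +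
    (1/Γ 1) * (∫ x in (1:ℝ)..(‖X 2 0 - X 0 0‖ ^ 2), (0 + 1 * P_K (Real.sqrt x)) / (2 * x)) +
    (1/Γ 2) * (∫ x in (1:ℝ)..(‖X 0 0 - X 1 0‖ ^ 2), (0 + 1 * P_K (Real.sqrt x)) / (2 * x)))
        + ((1/Γ 0) * RR + (1/Γ 1) * RR + (1/Γ 2) * RR))) := by
      exact tendsto_const_nhds.add
        ((((hRR.comp hq1).const_mul (1/Γ 0)).add
          ((hRR.comp hq2).const_mul (1/Γ 1))).add
          ((hRR.comp hq3).const_mul (1/Γ 2)))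
    apply hWt.congr'
    filter_upwards [hq1.eventually_ge_atTop 1, hq2.eventually_ge_atTop 1,
      hq3.eventually_ge_atTop 1] with t h1 h2 h3
    have e1 : Real.log ‖X 1 t - X 2 t‖
        = (∫ x in (1:ℝ)..(‖X 1 t - X 2 t‖ ^ 2), (0 + 1 * P_K (Real.sqrt x)) / (2 * x))
          + ∫ x in (1:ℝ)..(max 1 (‖X 1 t - X 2 t‖ ^ 2)), (1 + (-1) * P_K (Real.sqrt x)) / (2 * x) := by
      rw [max_eq_right h1]
      have hlog := Real.log_pow (‖X 1 t - X 2 t‖) 2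
      have hps := aux_psi_log hcont hPK h1
      push_cast at hlog
      linarith [hps, hlog]
    have e2 : Real.log ‖X 2 t - X 0 t‖
        = (∫ x in (1:ℝ)..(‖X 2 t - X 0 t‖ ^ 2), (0 + 1 * P_K (Real.sqrt x)) / (2 * x))
          + ∫ x in (1:ℝ)..(max 1 (‖X 2 t - X 0 t‖ ^ 2)), (1 + (-1) * P_K (Real.sqrt x)) / (2 * x) := by
      rw [max_eq_right h2]
      have hlog := Real.log_pow (‖X 2 t - X 0 t‖) 2
      have hps := aux_psi_log hcont hPK h2
      push_cast at hlog
      linarith [hps, hlog]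
    have e3 : Real.log ‖X 0 t - X 1 t‖
        = (∫ x in (1:ℝ)..(‖X 0 t - X 1 t‖ ^ 2), (0 + 1 * P_K (Real.sqrt x)) / (2 * x))
          + ∫ x in (1:ℝ)..(max 1 (‖X 0 t - X 1 t‖ ^ 2)), (1 + (-1) * P_K (Real.sqrt x)) / (2 * x) := by
      rw [max_eq_right h3]
      have hlog := Real.log_pow (‖X 0 t - X 1 t‖) 2
      have hps := aux_psi_log hcont hPK h3
      push_cast at hlog
      linarith [hps, hlog]
    have hcc := aux_hh_const hcont hPK hX hΓ t
    linear_combination (-1 : ℝ) * hcc - (1/Γ 0) * e1 - (1/Γ 1) * e2 - (1/Γ 2) * e3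
  exact aux_end_lemma (1/Γ 0) (1/Γ 1) (1/Γ 2) _ _
    (one_div_ne_zero (hΓ 0)) (one_div_ne_zero (hΓ 1)) (one_div_ne_zero (hΓ 2))
    (fun t => ‖X 1 t - X 2 t‖) (fun t => ‖X 2 t - X 0 t‖) (fun t => ‖X 0 t - X 1 t‖)
    hposd htri haT hbT hcT
    (fun t => aux_KK_const hX hΓ t) hW
end

section
/- Let h : ℝ² → [0,∞) be a radial function, h(x) = h_r(|x|), with h_r : [0,∞) → [0,∞) monotone nonincreasing, and suppose h ∈ L¹(ℝ²) ∩ L²(ℝ²). Let L : ℝ → (0,∞) be measurable and suppose there exist c₀ > 0 and τ₀ > 0 such that L(τ) ≥ c₀ √|τ| for all |τ| ≥ τ₀. Then the function τ ↦ ∫_{ℝ²} h((L(τ), 0) − y) h(y) dy is Lebesgue integrable on ℝ. -/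
open MeasureTheory

section EnstrophyAux

open Set Metric

private lemma enstrophy_lintegral_radial (f : ℝ → ℝ) (hf : Measurable f) :
    ∫⁻ x : EuclideanSpace ℝ (Fin 2), ENNReal.ofReal (f ‖x‖) =
      (volume : Measure (EuclideanSpace ℝ (Fin 2))).toSphere univ *
        ∫⁻ y in Ioi (0:ℝ), ENNReal.ofReal y * ENNReal.ofReal (f y) := by
  set μ : Measure (EuclideanSpace ℝ (Fin 2)) := volume with hμ
  have hg : Measurable fun r : ℝ => ENNReal.ofReal (f r) :=
    ENNReal.measurable_ofReal.comp hf
  have hgs : Measurable fun y : Ioi (0:ℝ) => ENNReal.ofReal (f y) :=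
    hg.comp measurable_subtype_coe
  have hdim : Module.finrank ℝ (EuclideanSpace ℝ (Fin 2)) - 1 = 1 := by
    rw [finrank_euclideanSpace_fin]
  calc ∫⁻ x : EuclideanSpace ℝ (Fin 2), ENNReal.ofReal (f ‖x‖) ∂μ
      = ∫⁻ x : ({(0 : EuclideanSpace ℝ (Fin 2))}ᶜ : Set (EuclideanSpace ℝ (Fin 2))),
          ENNReal.ofReal (f ‖x.1‖) ∂(μ.comap (↑)) := by
        have h1 := lintegral_subtype_comap (μ := μ)
          (measurableSet_singleton (0 : EuclideanSpace ℝ (Fin 2))).compl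
          (fun x => ENNReal.ofReal (f ‖x‖))
        rw [MeasureTheory.restrict_compl_singleton] at h1
        exact h1.symm
    _ = ∫⁻ p : sphere (0 : EuclideanSpace ℝ (Fin 2)) 1 × Ioi (0:ℝ), ENNReal.ofReal (f p.2)
          ∂(μ.toSphere.prod (.volumeIoiPow (Module.finrank ℝ (EuclideanSpace ℝ (Fin 2)) - 1))) :=
        by simpa using (μ.measurePreserving_homeomorphUnitSphereProd.lintegral_comp_emb
          (Homeomorph.measurableEmbedding _) fun p => ENNReal.ofReal (f p.2))
    _ = ∫⁻ y : Ioi (0:ℝ), ENNReal.ofReal (f y)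
          ∂(Measure.map Prod.snd (μ.toSphere.prod
            (.volumeIoiPow (Module.finrank ℝ (EuclideanSpace ℝ (Fin 2)) - 1)))) :=
        (lintegral_map hgs measurable_snd).symm
    _ = μ.toSphere univ * ∫⁻ y : Ioi (0:ℝ), ENNReal.ofReal (f y)
          ∂(Measure.volumeIoiPow (Module.finrank ℝ (EuclideanSpace ℝ (Fin 2)) - 1)) := by
        rw [Measure.map_snd_prod, lintegral_smul_measure, smul_eq_mul]
    _ = μ.toSphere univ * ∫⁻ y in Ioi (0:ℝ), ENNReal.ofReal y * ENNReal.ofReal (f y) := by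
        congr 1
        rw [hdim, Measure.volumeIoiPow,
          lintegral_withDensity_eq_lintegral_mul _
            (by exact ENNReal.measurable_ofReal.comp ((measurable_subtype_coe).pow_const 1)) hgs]
        calc ∫⁻ (a : Ioi (0:ℝ)), ((fun r : Ioi (0:ℝ) => ENNReal.ofReal (r.1 ^ 1)) *
                fun y : Ioi (0:ℝ) => ENNReal.ofReal (f y)) a ∂(Measure.comap Subtype.val volume)
            = ∫⁻ (a : Ioi (0:ℝ)), (fun y : ℝ => ENNReal.ofReal y * ENNReal.ofReal (f y)) a.1
                ∂(Measure.comap Subtype.val volume) := by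
              refine lintegral_congr fun a => ?_
              simp [pow_one]
          _ = _ := by exact lintegral_subtype_comap (measurableSet_Ioi (a := (0:ℝ))) (fun y : ℝ => ENNReal.ofReal y * ENNReal.ofReal (f y))

private lemma enstrophy_integrableOn_weight (f : ℝ → ℝ) (hf : Measurable f)
    (hf0 : ∀ r, 0 ≤ f r)
    (hfi : Integrable (fun x : EuclideanSpace ℝ (Fin 2) => f ‖x‖)) :
    IntegrableOn (fun y => y * f y) (Ioi (0:ℝ)) := by
  have h := hfi.lintegral_lt_top
  rw [enstrophy_lintegral_radial f hf] at h
  have hS0 : (volume : Measure (EuclideanSpace ℝ (Fin 2))).toSphere univ ≠ 0 := by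
    rw [Measure.toSphere_apply_univ]
    refine mul_ne_zero ?_ (measure_ball_pos _ _ one_pos).ne'
    simp [finrank_euclideanSpace_fin]
  have hfin : (∫⁻ y in Ioi (0:ℝ), ENNReal.ofReal y * ENNReal.ofReal (f y)) ≠ ⊤ := by
    intro htop
    rw [htop, ENNReal.mul_top hS0] at h
    exact lt_irrefl _ h
  refine ⟨(measurable_id.mul hf).aestronglyMeasurable, ?_⟩
  rw [hasFiniteIntegral_iff_ofReal ?_]
  · have heq : ∫⁻ y in Ioi (0:ℝ), ENNReal.ofReal (y * f y) =
        ∫⁻ y in Ioi (0:ℝ), ENNReal.ofReal y * ENNReal.ofReal (f y) := by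
      refine setLIntegral_congr_fun measurableSet_Ioi (fun y hy => ?_)
      rw [ENNReal.ofReal_mul (le_of_lt hy)]
    rw [heq]
    exact lt_top_iff_ne_top.2 hfin
  · filter_upwards [ae_restrict_mem measurableSet_Ioi] with y hy
    exact mul_nonneg (le_of_lt hy) (hf0 y)

private lemma enstrophy_integrableOn_sqrt_comp (f : ℝ → ℝ)
    (hw : IntegrableOn (fun y => y * f y) (Ioi (0:ℝ))) (c : ℝ) (hc : 0 < c) :
    IntegrableOn (fun τ => f (c * Real.sqrt τ)) (Ioi (0:ℝ)) := by
  have h1 : IntegrableOn (fun y : ℝ => (c * y) * f (c * y)) (Ioi (0:ℝ)) := by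
    have := (integrableOn_Ioi_comp_mul_left_iff (fun y => y * f y) 0 hc).2 (by simpa using hw)
    simpa using this
  have h2 : IntegrableOn (fun y : ℝ => y * f (c * y)) (Ioi (0:ℝ)) := by
    have h3 : IntegrableOn (fun y : ℝ => c⁻¹ * ((c * y) * f (c * y))) (Ioi (0:ℝ)) :=
      h1.const_mul c⁻¹
    refine h3.congr_fun (fun y _ => ?_) measurableSet_Ioi
    field_simp
  refine (integrableOn_Ioi_comp_rpow_iff' (fun τ => f (c * Real.sqrt τ)) (p := 2)
    two_ne_zero).1 ?_
  refine h2.congr_fun (fun x hx => ?_) measurableSet_Ioi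
  have hx0 : (0:ℝ) < x := hx
  have hsq : Real.sqrt (x ^ (2:ℝ)) = x := by
    rw [show (2:ℝ) = ((2:ℕ):ℝ) by norm_num, Real.rpow_natCast, Real.sqrt_sq hx0.le]
  rw [smul_eq_mul, hsq]
  norm_num [Real.rpow_one]

end EnstrophyAux

/-- Let `h` be a nonnegative radial function on ℝ² with monotone
nonincreasing profile, `h ∈ L¹ ∩ L²`, and let `L : ℝ → (0,∞)` be measurable with
`L(τ) ≥ c₀ √|τ|` for `|τ| ≥ τ₀`. Then `τ ↦ (h ∗ h)(point of norm L(τ))` is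
Lebesgue integrable on ℝ. -/
theorem enstrophy_interaction_integrable
    (h : EuclideanSpace ℝ (Fin 2) → ℝ) (h_r : ℝ → ℝ)
    (hrad : ∀ x, h x = h_r ‖x‖)
    (hnonneg : ∀ r : ℝ, 0 ≤ r → 0 ≤ h_r r)
    (hmono : ∀ a b : ℝ, 0 ≤ a → a ≤ b → h_r b ≤ h_r a)
    (hint : Integrable h) (hsq : MemLp h 2 volume)
    (L : ℝ → ℝ) (hLmeas : Measurable L) (hLpos : ∀ τ, 0 < L τ)
    (c₀ τ₀ : ℝ) (hc₀ : 0 < c₀) (hτ₀ : 0 < τ₀)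
    (hLgrow : ∀ τ : ℝ, τ₀ ≤ |τ| → c₀ * Real.sqrt |τ| ≤ L τ) :
    Integrable (fun τ : ℝ =>
      ∫ y, h (EuclideanSpace.single (0 : Fin 2) (L τ) - y) * h y) := by
  classical
  -- the globally antitone profile
  set f : ℝ → ℝ := fun r => h_r (max r 0) with hf_def
  have hf_anti : Antitone f := fun a b hab =>
    hmono _ _ (le_max_right _ _) (max_le_max hab le_rfl)
  have hf_meas : Measurable f := hf_anti.measurable
  have hf_nonneg : ∀ r, 0 ≤ f r := fun r => hnonneg _ (le_max_right _ _)
  have hrad' : ∀ x : EuclideanSpace ℝ (Fin 2), h x = f ‖x‖ := fun x => by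
    rw [hrad]
    have : max ‖x‖ 0 = ‖x‖ := max_eq_left (norm_nonneg x)
    simp only [hf_def, this]
  have h_eq : h = fun x : EuclideanSpace ℝ (Fin 2) => f ‖x‖ := funext hrad'
  have h_meas : Measurable h := by
    rw [h_eq]; exact hf_meas.comp measurable_norm
  have hnn : ∀ z : EuclideanSpace ℝ (Fin 2), 0 ≤ h z := fun z => by
    rw [hrad' z]; exact hf_nonneg _
  -- basic constants
  set A : ℝ := ∫ y : EuclideanSpace ℝ (Fin 2), h y with hA_def
  have hA : 0 ≤ A := integral_nonneg hnn
  set C : ℝ := ∫ y : EuclideanSpace ℝ (Fin 2), h y ^ 2 with hC_def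
  have hC : 0 ≤ C := integral_nonneg fun y => sq_nonneg _
  -- the point map
  set Φ : ℝ → EuclideanSpace ℝ (Fin 2) := fun τ => EuclideanSpace.single (0 : Fin 2) (L τ)
    with hΦ_def
  have hsingle_cont : Continuous (fun r : ℝ => EuclideanSpace.single (0 : Fin 2) r) := by
    have he : (fun r : ℝ => EuclideanSpace.single (0 : Fin 2) r)
        = fun r : ℝ => r • EuclideanSpace.single (0 : Fin 2) (1:ℝ) := by
      funext r; ext i; simp [EuclideanSpace.single_apply]
    rw [he]; exact continuous_id.smul continuous_const
  have hΦ_meas : Measurable Φ := hsingle_cont.measurable.comp hLmeas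
  have hΦ_norm : ∀ τ, ‖Φ τ‖ = L τ := fun τ => by
    show ‖EuclideanSpace.single (0 : Fin 2) (L τ)‖ = L τ
    rw [EuclideanSpace.norm_single, Real.norm_eq_abs]
    exact abs_of_pos (hLpos τ)
  -- translations
  have hMP : ∀ x : EuclideanSpace ℝ (Fin 2), MeasurePreserving (fun y => x - y)
      (volume : Measure (EuclideanSpace ℝ (Fin 2))) volume :=
    fun x => Measure.measurePreserving_sub_left volume x
  have hsq_tr : ∀ x : EuclideanSpace ℝ (Fin 2),
      MemLp (fun y => h (x - y)) 2 (volume : Measure (EuclideanSpace ℝ (Fin 2))) :=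
    fun x => by exact hsq.comp_measurePreserving (hMP x)
  have hint_tr : ∀ x : EuclideanSpace ℝ (Fin 2), Integrable (fun y => h (x - y)) := fun x => by
    exact memLp_one_iff_integrable.1
      ((memLp_one_iff_integrable.2 hint).comp_measurePreserving (hMP x))
  have hint_tr_eq : ∀ x : EuclideanSpace ℝ (Fin 2), (∫ y, h (x - y)) = A := fun x => by
    rw [hA_def]; exact integral_sub_left_eq_self h volume x
  -- integrability of products
  have hprod_int : ∀ x : EuclideanSpace ℝ (Fin 2), Integrable (fun y => h (x - y) * h y) := by
    intro x
    have hpqr : (1:ENNReal)/1 = 1/2 + 1/2 := by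
      rw [ENNReal.div_add_div_same, div_one, one_add_one_eq_two]
      exact (ENNReal.div_self two_ne_zero ENNReal.ofNat_ne_top).symm
    have hmem : MemLp ((fun y => h (x - y)) • h) 1
        (volume : Measure (EuclideanSpace ℝ (Fin 2))) := hsq.smul (hsq_tr x)
    have := memLp_one_iff_integrable.1 hmem
    simpa [Pi.smul_apply, smul_eq_mul, Pi.mul_def] using this
  -- nonnegativity of the convolution
  have hFnn : ∀ τ, 0 ≤ ∫ y, h (Φ τ - y) * h y := fun τ =>
    integral_nonneg fun y => mul_nonneg (hnn _) (hnn _)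
  -- measurability of the convolution in τ
  have hF_meas : AEStronglyMeasurable
      (fun τ : ℝ => ∫ y, h (Φ τ - y) * h y) (volume : Measure ℝ) := by
    refine (StronglyMeasurable.integral_prod_right ?_).aestronglyMeasurable
    apply Measurable.stronglyMeasurable
    exact ((h_meas.comp ((hΦ_meas.comp measurable_fst).sub measurable_snd)).mul
      (h_meas.comp measurable_snd))
  -- uniform L² bound
  have hboundC : ∀ τ, (∫ y, h (Φ τ - y) * h y) ≤ C := by
    intro τ
    set x := Φ τ with hx_def
    have h22 : (2:ℝ).HolderConjugate 2 := Real.HolderConjugate.two_two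
    have hle := integral_mul_le_Lp_mul_Lq_of_nonneg h22
      (ae_of_all _ fun y => hnn (x - y)) (ae_of_all _ hnn)
      (by simpa using hsq_tr x) (by simpa using hsq)
    have hrpow : ∀ t : ℝ, t ^ (2:ℝ) = t ^ 2 := fun t => by
      rw [show (2:ℝ) = ((2:ℕ):ℝ) by norm_num, Real.rpow_natCast]
    have hCr : (∫ y, h y ^ (2:ℝ)) = C := by
      rw [hC_def]
      exact integral_congr_ae (ae_of_all _ fun y => hrpow (h y))
    have htr2 : (∫ y, h (x - y) ^ (2:ℝ)) = C := by
      have e1 : (∫ y, h (x - y) ^ (2:ℝ)) = ∫ y, h y ^ (2:ℝ) :=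
        integral_sub_left_eq_self (fun z => h z ^ (2:ℝ)) volume x
      rw [e1, hCr]
    rw [htr2, hCr] at hle
    calc (∫ y, h (x - y) * h y) ≤ C ^ (1/(2:ℝ)) * C ^ (1/(2:ℝ)) := hle
      _ = Real.sqrt C * Real.sqrt C := by rw [Real.sqrt_eq_rpow]
      _ = C := Real.mul_self_sqrt hC
  -- decay bound
  have hbound2 : ∀ τ : ℝ, τ₀ ≤ |τ| →
      (∫ y, h (Φ τ - y) * h y) ≤ 2 * A * f ((c₀/2) * Real.sqrt |τ|) := by
    intro τ hτ
    set x := Φ τ with hx_def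
    have hxnorm : ‖x‖ = L τ := hΦ_norm τ
    have key : ∀ y : EuclideanSpace ℝ (Fin 2),
        h (x - y) * h y ≤ f (L τ / 2) * (h (x - y) + h y) := by
      intro y
      have hfnn := hf_nonneg (L τ / 2)
      rcases le_or_gt (L τ / 2) ‖y‖ with hy | hy
      · have hhy : h y ≤ f (L τ / 2) := by rw [hrad' y]; exact hf_anti hy
        nlinarith [hnn (x - y), hnn y]
      · have hxy : L τ / 2 ≤ ‖x - y‖ := by
          have hns := norm_sub_norm_le x y
          rw [hxnorm] at hns
          linarith
        have hhxy : h (x - y) ≤ f (L τ / 2) := by rw [hrad' (x - y)]; exact hf_anti hxy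
        nlinarith [hnn (x - y), hnn y]
    have hIntR : Integrable (fun y : EuclideanSpace ℝ (Fin 2) =>
        f (L τ / 2) * (h (x - y) + h y)) := ((hint_tr x).add hint).const_mul _
    have h1 : (∫ y, h (x - y) * h y) ≤ ∫ y, f (L τ / 2) * (h (x - y) + h y) :=
      integral_mono (hprod_int x) hIntR key
    have h2 : (∫ y, f (L τ / 2) * (h (x - y) + h y)) = f (L τ / 2) * (A + A) := by
      rw [integral_const_mul, integral_add (hint_tr x) hint, hint_tr_eq x, hA_def]
    have h3 : f (L τ / 2) ≤ f ((c₀/2) * Real.sqrt |τ|) := by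
      refine hf_anti ?_
      have hgrow := hLgrow τ hτ
      have hh : (c₀/2) * Real.sqrt |τ| = c₀ * Real.sqrt |τ| / 2 := by ring
      rw [hh]
      linarith
    calc (∫ y, h (x - y) * h y) ≤ f (L τ / 2) * (A + A) := h1.trans (le_of_eq h2)
      _ ≤ f ((c₀/2) * Real.sqrt |τ|) * (A + A) := by
          apply mul_le_mul_of_nonneg_right h3; linarith
      _ = 2 * A * f ((c₀/2) * Real.sqrt |τ|) := by ring
  -- the dominating function
  set g1 : ℝ → ℝ := fun t => 2 * A * f ((c₀/2) * Real.sqrt t) with hg1_def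
  have hg1nn : ∀ t, 0 ≤ g1 t := fun t => mul_nonneg (by linarith) (hf_nonneg _)
  have hg1_int : IntegrableOn g1 (Set.Ioi τ₀) := by
    have hcore : IntegrableOn (fun t => f ((c₀/2) * Real.sqrt t)) (Set.Ioi (0:ℝ)) := by
      refine enstrophy_integrableOn_sqrt_comp f ?_ (c₀/2) (by positivity)
      refine enstrophy_integrableOn_weight f hf_meas hf_nonneg ?_
      rw [← h_eq]; exact hint
    exact ((hcore.mono_set (Set.Ioi_subset_Ioi hτ₀.le)).const_mul (2 * A))
  set maj : ℝ → ℝ := fun τ =>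
      Set.indicator (Set.Icc (-τ₀) τ₀) (fun _ => C) τ
      + Set.indicator (Set.Ioi τ₀) g1 τ
      + Set.indicator (Set.Iio (-τ₀)) (fun t => g1 (-t)) τ with hmaj_def
  have hmaj_int : Integrable maj := by
    have i1 : Integrable (Set.indicator (Set.Icc (-τ₀) τ₀) (fun _ : ℝ => C)) := by
      rw [integrable_indicator_iff measurableSet_Icc]
      exact integrableOn_const measure_Icc_lt_top.ne
    have i2 : Integrable (Set.indicator (Set.Ioi τ₀) g1) := by
      rw [integrable_indicator_iff measurableSet_Ioi]; exact hg1_int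
    have i3 : Integrable (Set.indicator (Set.Iio (-τ₀)) (fun t => g1 (-t))) := by
      have hrefl : Integrable (fun τ : ℝ => Set.indicator (Set.Ioi τ₀) g1 (-τ)) := by
        exact memLp_one_iff_integrable.1
          ((memLp_one_iff_integrable.2 i2).comp_measurePreserving
            (Measure.measurePreserving_neg (volume : Measure ℝ)))
      refine hrefl.congr (ae_of_all _ fun τ => ?_)
      show Set.indicator (Set.Ioi τ₀) g1 (-τ) = Set.indicator (Set.Iio (-τ₀)) (fun t => g1 (-t)) τ
      by_cases hτ : τ < -τ₀
      · have h1 : τ₀ < -τ := by linarith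
        rw [Set.indicator_of_mem (Set.mem_Ioi.2 h1), Set.indicator_of_mem (Set.mem_Iio.2 hτ)]
      · have h1 : ¬ (τ₀ < -τ) := fun hcon => hτ (by linarith)
        rw [Set.indicator_of_notMem (fun hm => h1 (Set.mem_Ioi.1 hm)),
          Set.indicator_of_notMem (fun hm => hτ (Set.mem_Iio.1 hm))]
    exact (i1.add i2).add i3
  -- the domination
  refine Integrable.mono' hmaj_int hF_meas (ae_of_all _ fun τ => ?_)
  rw [Real.norm_of_nonneg (hFnn τ)]
  have ind1nn : 0 ≤ Set.indicator (Set.Icc (-τ₀) τ₀) (fun _ : ℝ => C) τ :=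
    Set.indicator_nonneg (fun _ _ => hC) τ
  have ind2nn : 0 ≤ Set.indicator (Set.Ioi τ₀) g1 τ :=
    Set.indicator_nonneg (fun t _ => hg1nn t) τ
  have ind3nn : 0 ≤ Set.indicator (Set.Iio (-τ₀)) (fun t => g1 (-t)) τ :=
    Set.indicator_nonneg (fun t _ => hg1nn (-t)) τ
  show (∫ y, h (Φ τ - y) * h y) ≤ maj τ
  have hmaj_eq : maj τ = Set.indicator (Set.Icc (-τ₀) τ₀) (fun _ => C) τ
      + Set.indicator (Set.Ioi τ₀) g1 τ
      + Set.indicator (Set.Iio (-τ₀)) (fun t => g1 (-t)) τ := rfl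
  rw [hmaj_eq]
  rcases le_or_gt |τ| τ₀ with hcase | hcase
  · have hmem : τ ∈ Set.Icc (-τ₀) τ₀ := by
      rcases abs_le.1 hcase with ⟨ha, hb⟩; exact ⟨ha, hb⟩
    rw [Set.indicator_of_mem hmem]
    linarith [hboundC τ]
  · have hτabs : τ₀ ≤ |τ| := hcase.le
    have hb2 := hbound2 τ hτabs
    rcases le_or_gt 0 τ with hsign | hsign
    · have habs : |τ| = τ := abs_of_nonneg hsign
      have hmem : τ ∈ Set.Ioi τ₀ := by rw [habs] at hcase; exact hcase
      rw [Set.indicator_of_mem hmem]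
      have hFg : (∫ y, h (Φ τ - y) * h y) ≤ g1 τ := by
        rw [habs] at hb2; exact hb2
      linarith
    · have habs : |τ| = -τ := abs_of_neg hsign
      have hmem : τ ∈ Set.Iio (-τ₀) := by
        rw [habs] at hcase; exact Set.mem_Iio.2 (by linarith)
      rw [Set.indicator_of_mem hmem]
      have hFg : (∫ y, h (Φ τ - y) * h y) ≤ g1 (-τ) := by
        rw [habs] at hb2; exact hb2
      linarith
end

section
/- There is an absolute constant C > 0 with the following property. Let h : ℝ² → [0,∞) be measurable with A := ess sup_{y ∈ ℝ²} |y|³ h(y) < ∞, B := ∫_{ℝ²} |y| h(y) dy < ∞, and h ∈ L¹(ℝ²). Then for every x ∈ ℝ² with |x| ≥ 1, | ∫_{ℝ²} log(|x − y|/|x|) h(y) dy | ≤ C (A + B + ‖h‖_{L¹}) / |x|. -/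
open MeasureTheory

private lemma log_pw_aux {t : ℝ} (ht : 1/2 ≤ t) : |Real.log t| ≤ 2 * |t - 1| := by
  have ht0 : (0:ℝ) < t := by linarith
  rcases le_or_gt 1 t with h | h
  · rw [abs_of_nonneg (Real.log_nonneg h), abs_of_nonneg (by linarith)]
    have := Real.log_le_sub_one_of_pos ht0
    linarith
  · rw [abs_of_nonpos (Real.log_nonpos (by linarith) h.le), abs_of_nonpos (by linarith)]
    have h1 : Real.log t⁻¹ ≤ t⁻¹ - 1 := Real.log_le_sub_one_of_pos (by positivity)
    rw [Real.log_inv] at h1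
    have hti : t * t⁻¹ = 1 := mul_inv_cancel₀ ht0.ne'
    nlinarith [inv_pos.mpr ht0]

private lemma log_pw {R s n hv A : ℝ} (hR : 1 ≤ R) (hs : 0 ≤ s)
    (htri : |s - R| ≤ n) (hh : 0 ≤ hv) (hA : 0 ≤ A) (hA3 : n ^ 3 * hv ≤ A) :
    |Real.log (s / R)| * hv ≤
      2 * (n * hv) / R + 8 * A / R ^ 3 * max 0 (Real.log (R / s)) := by
  have hR0 : (0:ℝ) < R := by linarith
  have hn : 0 ≤ n := le_trans (abs_nonneg _) htri
  have ht1 : 0 ≤ 2 * (n * hv) / R := by positivity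
  have hmax : ∀ u : ℝ, (0:ℝ) ≤ max 0 u := fun u => le_max_left _ _
  have ht2 : 0 ≤ 8 * A / R ^ 3 * max 0 (Real.log (R / s)) := by
    have := hmax (Real.log (R / s)); positivity
  rcases eq_or_lt_of_le hs with hs0 | hs0
  · rw [← hs0]
    simp only [zero_div, Real.log_zero, abs_zero, zero_mul]
    have := hmax (Real.log (R / 0)); positivity
  · have habs := abs_le.mp htri
    have hkey : ∀ m : ℝ, m ≤ n → |Real.log (s / R)| * hv ≤ 2 * (m * hv) / R →
        |Real.log (s / R)| * hv ≤ 2 * (n * hv) / R + 8 * A / R ^ 3 * max 0 (Real.log (R / s)) := by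
      intro m hm hle
      have : 2 * (m * hv) / R ≤ 2 * (n * hv) / R := by gcongr
      linarith
    rcases le_or_gt (2 * n) R with hcase | hcase
    · have h12 : 1/2 ≤ s / R := by rw [le_div_iff₀ hR0]; linarith
      have hlog := log_pw_aux h12
      have habs2 : |s / R - 1| ≤ n / R := by
        rw [div_sub_one hR0.ne', abs_div, abs_of_pos hR0]
        gcongr
      refine hkey n le_rfl ?_
      calc |Real.log (s / R)| * hv ≤ 2 * (n / R) * hv := by
            apply mul_le_mul_of_nonneg_right _ hh
            linarith
        _ = 2 * (n * hv) / R := by ring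
    · rcases le_or_gt R s with hRs | hsR
      · have h0 : 0 ≤ Real.log (s / R) := Real.log_nonneg (by rw [le_div_iff₀ hR0]; linarith)
        have h1 : Real.log (s / R) ≤ s / R - 1 := Real.log_le_sub_one_of_pos (by positivity)
        have h2 : s / R - 1 ≤ n / R := by
          rw [div_sub_one hR0.ne']
          gcongr
          linarith
        refine hkey n le_rfl ?_
        rw [abs_of_nonneg h0]
        calc Real.log (s / R) * hv ≤ (n / R) * hv :=
              mul_le_mul_of_nonneg_right (h1.trans h2) hh
          _ = n * hv / R := by ring
          _ ≤ 2 * (n * hv) / R := by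
              rw [show 2 * (n * hv) / R = n * hv / R + n * hv / R by ring]
              have : 0 ≤ n * hv / R := by positivity
              linarith
      · have hlogeq : Real.log (s / R) = -Real.log (R / s) := by
          rw [Real.log_div hs0.ne' hR0.ne', Real.log_div hR0.ne' hs0.ne']; ring
        have hpos : 0 ≤ Real.log (R / s) := Real.log_nonneg (by rw [le_div_iff₀ hs0]; linarith)
        rw [hlogeq, abs_neg, abs_of_nonneg hpos]
        have hvle : hv ≤ 8 * A / R ^ 3 := by
          rw [le_div_iff₀ (by positivity)]
          have hcube : (R/2) ^ 3 ≤ n ^ 3 := by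
            apply pow_le_pow_left₀ (by positivity) (by linarith)
          have e : (R/2:ℝ) ^ 3 = R ^ 3 / 8 := by ring
          nlinarith [mul_le_mul_of_nonneg_right hcube hh]
        calc Real.log (R / s) * hv ≤ Real.log (R / s) * (8 * A / R ^ 3) :=
              mul_le_mul_of_nonneg_left hvle hpos
          _ = 8 * A / R ^ 3 * max 0 (Real.log (R / s)) := by rw [max_eq_right hpos]; ring
          _ ≤ 2 * (n * hv) / R + 8 * A / R ^ 3 * max 0 (Real.log (R / s)) := by linarith

private lemma E2_volume_ball (x : EuclideanSpace ℝ (Fin 2)) (r : ℝ) (hr : 0 ≤ r) :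
    volume (Metric.ball x r) = ENNReal.ofReal (Real.pi * r ^ 2) := by
  rw [EuclideanSpace.volume_ball]
  simp only [Fintype.card_fin]
  rw [show ((2:ℕ):ℝ) / 2 + 1 = 2 by norm_num, Real.Gamma_two]
  rw [← ENNReal.ofReal_pow hr, ← ENNReal.ofReal_mul (by positivity)]
  congr 1
  rw [Real.sq_sqrt Real.pi_pos.le]
  ring

private lemma level_set_eq (x : EuclideanSpace ℝ (Fin 2)) {R : ℝ} (hR : 0 < R)
    {t : ℝ} (ht : t ∈ Set.Ioi (0:ℝ)) :
    {y : EuclideanSpace ℝ (Fin 2) | t < max 0 (Real.log (R / ‖x - y‖))}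
      = Metric.ball x (R * Real.exp (-t)) \ {x} := by
  ext y
  simp only [Set.mem_setOf_eq, Set.mem_diff, Metric.mem_ball, Set.mem_singleton_iff]
  have ht0 : (0:ℝ) < t := ht
  rw [lt_max_iff]
  constructor
  · rintro (h | h)
    · linarith
    · have hsne : ‖x - y‖ ≠ 0 := by
        intro h0
        rw [h0, div_zero, Real.log_zero] at h
        linarith
      have hs0 : 0 < ‖x - y‖ := lt_of_le_of_ne (norm_nonneg _) (Ne.symm hsne)
      have hlt := (Real.lt_log_iff_exp_lt (by positivity)).mp h
      rw [lt_div_iff₀ hs0] at hlt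
      constructor
      · rw [dist_eq_norm, ← norm_sub_rev]
        rw [show R * Real.exp (-t) = R / Real.exp t by
          rw [Real.exp_neg]; ring]
        rw [lt_div_iff₀ (Real.exp_pos t)]
        linarith [hlt]
      · intro hyx
        rw [hyx, sub_self, norm_zero] at hsne
        exact hsne rfl
  · rintro ⟨hball, hne⟩
    right
    have hs0 : 0 < ‖x - y‖ := by
      rw [norm_sub_pos_iff]
      exact fun hc => hne hc.symm
    rw [Real.lt_log_iff_exp_lt (by positivity), lt_div_iff₀ hs0]
    rw [dist_eq_norm, ← norm_sub_rev x y] at hball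
    calc Real.exp t * ‖x - y‖ = ‖x - y‖ * Real.exp t := by ring
      _ < (R * Real.exp (-t)) * Real.exp t := by
          apply mul_lt_mul_of_pos_right hball (Real.exp_pos t)
      _ = R := by rw [mul_assoc, ← Real.exp_add]; simp

/-- There is an absolute constant `C > 0` such that for every
nonnegative integrable `h` on ℝ² with `|y|³ h(y) ≤ A` a.e. and
`B = ∫ |y| h(y) dy < ∞`, one has
`|∫ log(|x−y|/|x|) h(y) dy| ≤ C (A + B + ‖h‖_{L¹}) / |x|` whenever `|x| ≥ 1`. -/
theorem log_correction_decay :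
    ∃ C : ℝ, 0 < C ∧
      ∀ (h : EuclideanSpace ℝ (Fin 2) → ℝ) (A B : ℝ),
        (∀ y, 0 ≤ h y) → Integrable h →
        (0 ≤ A) → (∀ᵐ y : EuclideanSpace ℝ (Fin 2), ‖y‖ ^ 3 * h y ≤ A) →
        Integrable (fun y : EuclideanSpace ℝ (Fin 2) => ‖y‖ * h y) →
        (B = ∫ y : EuclideanSpace ℝ (Fin 2), ‖y‖ * h y) →
        ∀ x : EuclideanSpace ℝ (Fin 2), 1 ≤ ‖x‖ →
          |∫ y, Real.log (‖x - y‖ / ‖x‖) * h y|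
            ≤ C * (A + B + ∫ y, h y) / ‖x‖ := by
  set K : ℝ := ∫ t in Set.Ioi (0:ℝ), Real.exp (-t) ^ 2 with hKdef
  have hKnn : 0 ≤ K := integral_nonneg fun t => by positivity
  have hKint : IntegrableOn (fun t : ℝ => Real.exp (-t) ^ 2) (Set.Ioi (0:ℝ)) := by
    have hbase : IntegrableOn (fun t : ℝ => Real.exp (-1 * t)) (Set.Ioi (0:ℝ)) :=
      exp_neg_integrableOn_Ioi 0 one_pos
    apply hbase.mono' ((Real.continuous_exp.comp continuous_neg).pow 2).aestronglyMeasurable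
    filter_upwards [ae_restrict_mem measurableSet_Ioi] with t ht
    have ht0 : (0:ℝ) < t := ht
    change ‖Real.exp (-t) ^ 2‖ ≤ _
    rw [Real.norm_eq_abs, abs_of_nonneg (by positivity : (0:ℝ) ≤ Real.exp (-t) ^ 2)]
    calc Real.exp (-t) ^ 2 = Real.exp (-t) * Real.exp (-t) := sq (Real.exp (-t)) ▸ by ring
      _ ≤ 1 * Real.exp (-t) := by
          apply mul_le_mul_of_nonneg_right _ (Real.exp_pos _).le
          exact Real.exp_le_one_iff.mpr (by linarith)
      _ = Real.exp (-1 * t) := by rw [one_mul]; congr 1; ring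
  refine ⟨8 * Real.pi * K + 3, by positivity, ?_⟩
  intro h A B hh0 hhint hA0 hA3 hBint hBdef x hx
  set R : ℝ := ‖x‖ with hRdef
  have hR0 : (0:ℝ) < R := lt_of_lt_of_le one_pos hx
  have hBnn : 0 ≤ B := hBdef ▸ integral_nonneg fun y => mul_nonneg (norm_nonneg _) (hh0 y)
  have hInn : 0 ≤ ∫ y, h y := integral_nonneg hh0
  have hRHS : 0 ≤ (8 * Real.pi * K + 3) * (A + B + ∫ y, h y) / R := by positivity
  by_cases hfi : Integrable (fun y : EuclideanSpace ℝ (Fin 2) => Real.log (‖x - y‖ / R) * h y)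
  swap
  · rw [integral_undef hfi, abs_zero]; exact hRHS
  -- pointwise a.e. bound
  have key : ∀ᵐ y : EuclideanSpace ℝ (Fin 2),
      |Real.log (‖x - y‖ / R) * h y| ≤
        2 * (‖y‖ * h y) / R + 8 * A / R ^ 3 * max 0 (Real.log (R / ‖x - y‖)) := by
    filter_upwards [hA3] with y hy
    have htri : |‖x - y‖ - R| ≤ ‖y‖ := by
      have := abs_norm_sub_norm_le (x - y) x
      rwa [sub_sub_cancel_left, norm_neg] at this
    rw [abs_mul, abs_of_nonneg (hh0 y)]
    exact log_pw hx (norm_nonneg _) htri (hh0 y) hA0 hy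
  -- measurability
  have hgm : Measurable fun y : EuclideanSpace ℝ (Fin 2) =>
      max 0 (Real.log (R / ‖x - y‖)) :=
    measurable_const.max (Real.measurable_log.comp
      (measurable_const.div ((continuous_const.sub continuous_id).norm.measurable)))
  -- the layer cake computation
  have hL : (∫⁻ y : EuclideanSpace ℝ (Fin 2),
      ENNReal.ofReal (max 0 (Real.log (R / ‖x - y‖))))
        = ENNReal.ofReal (Real.pi * R ^ 2 * K) := by
    refine (lintegral_eq_lintegral_meas_lt
      (f := fun y : EuclideanSpace ℝ (Fin 2) => max 0 (Real.log (R / ‖x - y‖))) volume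
      (Filter.Eventually.of_forall fun y => le_max_left _ _) hgm.aemeasurable).trans ?_
    have hcongr : ∀ t ∈ Set.Ioi (0:ℝ),
        volume {y : EuclideanSpace ℝ (Fin 2) | t < max 0 (Real.log (R / ‖x - y‖))}
          = ENNReal.ofReal (Real.pi * R ^ 2 * Real.exp (-t) ^ 2) := by
      intro t ht
      rw [level_set_eq x hR0 ht, measure_diff_null (measure_singleton x),
        E2_volume_ball x _ (by positivity)]
      congr 1
      ring
    rw [setLIntegral_congr_fun measurableSet_Ioi
      hcongr]
    rw [← ofReal_integral_eq_lintegral_ofReal (hKint.const_mul (Real.pi * R ^ 2))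
      (Filter.Eventually.of_forall fun t => by positivity)]
    congr 1
    rw [MeasureTheory.integral_const_mul, hKdef]
  -- main estimate
  have habs : |∫ y, Real.log (‖x - y‖ / R) * h y|
      ≤ ∫ y, |Real.log (‖x - y‖ / R) * h y| := by
    have := norm_integral_le_integral_norm (μ := volume)
      (fun y : EuclideanSpace ℝ (Fin 2) => Real.log (‖x - y‖ / R) * h y)
    simpa only [Real.norm_eq_abs] using this
  set D : ℝ := 2 * B / R + 8 * A / R ^ 3 * (Real.pi * R ^ 2 * K) with hDdef
  have hDnn : 0 ≤ D := by positivity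
  have hg1aem : AEMeasurable
      (fun y : EuclideanSpace ℝ (Fin 2) => ENNReal.ofReal (2 * (‖y‖ * h y) / R)) volume :=
    ENNReal.measurable_ofReal.comp_aemeasurable
      (((measurable_norm.aemeasurable.mul hhint.aemeasurable).const_mul 2).div_const R)
  have hpiece1 : (∫⁻ y : EuclideanSpace ℝ (Fin 2), ENNReal.ofReal (2 * (‖y‖ * h y) / R))
      = ENNReal.ofReal (2 * B / R) := by
    have hrw : ∀ y : EuclideanSpace ℝ (Fin 2),
        ENNReal.ofReal (2 * (‖y‖ * h y) / R)
          = ENNReal.ofReal (2 / R) * ENNReal.ofReal (‖y‖ * h y) := by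
      intro y
      rw [← ENNReal.ofReal_mul (by positivity : (0:ℝ) ≤ 2 / R)]
      congr 1
      ring
    simp_rw [hrw]
    rw [lintegral_const_mul' _ _ ENNReal.ofReal_ne_top,
      ← ofReal_integral_eq_lintegral_ofReal hBint
        (Filter.Eventually.of_forall fun y => mul_nonneg (norm_nonneg _) (hh0 y)),
      ← hBdef, ← ENNReal.ofReal_mul (by positivity : (0:ℝ) ≤ 2 / R)]
    congr 1
    ring
  have hpiece2 : (∫⁻ y : EuclideanSpace ℝ (Fin 2),
      ENNReal.ofReal (8 * A / R ^ 3 * max 0 (Real.log (R / ‖x - y‖))))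
        = ENNReal.ofReal (8 * A / R ^ 3 * (Real.pi * R ^ 2 * K)) := by
    have hrw : ∀ y : EuclideanSpace ℝ (Fin 2),
        ENNReal.ofReal (8 * A / R ^ 3 * max 0 (Real.log (R / ‖x - y‖)))
          = ENNReal.ofReal (8 * A / R ^ 3)
              * ENNReal.ofReal (max 0 (Real.log (R / ‖x - y‖))) := fun y =>
      ENNReal.ofReal_mul (by positivity : (0:ℝ) ≤ 8 * A / R ^ 3)
    simp_rw [hrw]
    rw [lintegral_const_mul' _ _ ENNReal.ofReal_ne_top, hL,
      ← ENNReal.ofReal_mul (by positivity : (0:ℝ) ≤ 8 * A / R ^ 3)]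
  have hchain : ENNReal.ofReal (∫ y, |Real.log (‖x - y‖ / R) * h y|)
      ≤ ENNReal.ofReal D := by
    rw [ofReal_integral_eq_lintegral_ofReal hfi.abs
      (Filter.Eventually.of_forall fun y => abs_nonneg _)]
    calc (∫⁻ y, ENNReal.ofReal |Real.log (‖x - y‖ / R) * h y|)
        ≤ ∫⁻ y : EuclideanSpace ℝ (Fin 2), (ENNReal.ofReal (2 * (‖y‖ * h y) / R)
            + ENNReal.ofReal (8 * A / R ^ 3 * max 0 (Real.log (R / ‖x - y‖)))) := by
          refine lintegral_mono_ae ?_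
          filter_upwards [key] with y hy
          exact le_trans (ENNReal.ofReal_le_ofReal hy) ENNReal.ofReal_add_le
      _ = (∫⁻ y : EuclideanSpace ℝ (Fin 2), ENNReal.ofReal (2 * (‖y‖ * h y) / R))
            + ∫⁻ y : EuclideanSpace ℝ (Fin 2),
                ENNReal.ofReal (8 * A / R ^ 3 * max 0 (Real.log (R / ‖x - y‖))) :=
          lintegral_add_left' hg1aem _
      _ = ENNReal.ofReal (2 * B / R)
            + ENNReal.ofReal (8 * A / R ^ 3 * (Real.pi * R ^ 2 * K)) := by
          rw [hpiece1, hpiece2]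
      _ = ENNReal.ofReal D := by
          rw [← ENNReal.ofReal_add (by positivity) (by positivity)]
  have hintabs : (∫ y, |Real.log (‖x - y‖ / R) * h y|) ≤ D :=
    (ENNReal.ofReal_le_ofReal_iff hDnn).mp hchain
  have hDfin : D ≤ (8 * Real.pi * K + 3) * (A + B + ∫ y, h y) / R := by
    have hDeq : D = (2 * B + 8 * Real.pi * K * A) / R := by
      field_simp
      have h1 : R * R⁻¹ = 1 := mul_inv_cancel₀ hR0.ne'
      have h2 : R ^ 3 * R⁻¹ ^ 3 = 1 := by rw [← mul_pow, h1, one_pow]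
      linear_combination (2 * B) * h1 + (8 * A * Real.pi * K) * h2
    rw [hDeq]
    gcongr
    nlinarith [mul_nonneg (mul_nonneg (mul_nonneg (by norm_num : (0:ℝ) ≤ 8) Real.pi_pos.le)
      hKnn) (add_nonneg hBnn hInn), mul_nonneg (mul_nonneg (mul_nonneg
      (by norm_num : (0:ℝ) ≤ 8) Real.pi_pos.le) hKnn) hA0]
  linarith [habs, hintabs, hDfin]
end

section
/- Let h_r : [0,∞) → (0,∞) be continuous with 2π ∫₀^∞ s h_r(s) ds = 1, differentiable with h_r'(s) < 0 for all s > 0, and define P_K(r) := 2π ∫₀^r s h_r(s) ds. Let H_G : (0,∞) → ℝ be any differentiable function satisfying H_G'(r) = −(1 − P_K(r))/r for all r > 0. Then: (i) the function r ↦ H_G(√r) is strictly decreasing and strictly convex on (0,∞); and (ii) the function H_P(r) := (1/2) log r + H_G(√r) is strictly increasing and strictly concave on (0,∞). -/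
open MeasureTheory

set_option maxHeartbeats 1600000 in
/-- For a positive, continuous, strictly decreasing
(`h_r' < 0`) profile `h_r` with `2π ∫₀^∞ s h_r(s) ds = 1`,
`P_K(r) = 2π ∫₀^r s h_r(s) ds`, and any differentiable `H_G` on `(0,∞)` with
`H_G'(r) = −(1 − P_K(r))/r`: (i) `r ↦ H_G(√r)` is strictly decreasing and strictly
convex on `(0,∞)`; (ii) `H_P(r) = (1/2) log r + H_G(√r)` is strictly increasing and
strictly concave on `(0,∞)`. -/
theorem H_G_H_P_properties (h_r : ℝ → ℝ)
    (hcont : ContinuousOn h_r (Set.Ici 0))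
    (hpos : ∀ s : ℝ, 0 ≤ s → 0 < h_r s)
    (hint : IntegrableOn (fun s => s * h_r s) (Set.Ioi 0))
    (hnorm : 2 * Real.pi * ∫ s in Set.Ioi (0 : ℝ), s * h_r s = 1)
    (h_r' : ℝ → ℝ)
    (hderiv : ∀ s : ℝ, 0 < s → HasDerivAt h_r (h_r' s) s)
    (hneg : ∀ s : ℝ, 0 < s → h_r' s < 0)
    (P_K : ℝ → ℝ)
    (hPK : ∀ r : ℝ, P_K r = 2 * Real.pi * ∫ s in (0 : ℝ)..r, s * h_r s)
    (H_G : ℝ → ℝ)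
    (hHG : ∀ r : ℝ, 0 < r → HasDerivAt H_G (-(1 - P_K r) / r) r)
    (H_P : ℝ → ℝ)
    (hHP : ∀ r : ℝ, H_P r = (1 / 2) * Real.log r + H_G (Real.sqrt r)) :
    (StrictAntiOn (fun r => H_G (Real.sqrt r)) (Set.Ioi 0) ∧
      StrictConvexOn ℝ (Set.Ioi 0) (fun r => H_G (Real.sqrt r))) ∧
    (StrictMonoOn H_P (Set.Ioi 0) ∧ StrictConcaveOn ℝ (Set.Ioi 0) H_P) := by
  have hπ : (0:ℝ) < 2 * Real.pi := by positivity
  -- continuity/integrability of the integrand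
  have hcont' : ContinuousOn (fun s => s * h_r s) (Set.Ici 0) :=
    continuousOn_id.mul hcont
  have hII : ∀ a b : ℝ, 0 ≤ a → 0 ≤ b →
      IntervalIntegrable (fun s => s * h_r s) volume a b := by
    intro a b ha hb
    apply ContinuousOn.intervalIntegrable
    apply hcont'.mono
    intro x hx
    rcases Set.mem_uIcc.1 hx with h | h
    · exact le_trans ha h.1
    · exact le_trans hb h.1
  -- h_r is strictly antitone on [0, ∞)
  have hanti : StrictAntiOn h_r (Set.Ici 0) := by
    apply strictAntiOn_of_deriv_neg (convex_Ici 0) hcont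
    intro x hx
    rw [interior_Ici] at hx
    rw [(hderiv x hx).deriv]
    exact hneg x hx
  -- P_K is strictly increasing on [0, ∞)
  have hPmono : ∀ a b : ℝ, 0 ≤ a → a < b → P_K a < P_K b := by
    intro a b ha hab
    rw [hPK, hPK]
    have hsplit : (∫ s in (0:ℝ)..a, s * h_r s) + (∫ s in a..b, s * h_r s)
        = ∫ s in (0:ℝ)..b, s * h_r s :=
      intervalIntegral.integral_add_adjacent_intervals (hII 0 a le_rfl ha)
        (hII a b ha (ha.trans hab.le))
    have hposint : 0 < ∫ s in a..b, s * h_r s := by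
      apply intervalIntegral.intervalIntegral_pos_of_pos_on (hII a b ha (ha.trans hab.le))
      · intro x hx
        exact mul_pos (lt_of_le_of_lt ha hx.1) (hpos x (ha.trans hx.1.le))
      · exact hab
    nlinarith
  have hPK0 : P_K 0 = 0 := by simp [hPK]
  have hPpos : ∀ s : ℝ, 0 < s → 0 < P_K s := by
    intro s hs
    have := hPmono 0 s le_rfl hs
    rwa [hPK0] at this
  -- P_K s < 1 for s > 0
  have hPlt1 : ∀ s : ℝ, 0 < s → P_K s < 1 := by
    intro s hs
    rw [← hnorm, hPK]
    have h1 : (∫ t in (0:ℝ)..s, t * h_r t) < ∫ t in (0:ℝ)..(s+1), t * h_r t := by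
      have hsplit : (∫ t in (0:ℝ)..s, t * h_r t) + (∫ t in s..(s+1), t * h_r t)
          = ∫ t in (0:ℝ)..(s+1), t * h_r t :=
        intervalIntegral.integral_add_adjacent_intervals (hII 0 s le_rfl hs.le)
          (hII s (s+1) hs.le (by linarith))
      have hposint : 0 < ∫ t in s..(s+1), t * h_r t := by
        apply intervalIntegral.intervalIntegral_pos_of_pos_on
          (hII s (s+1) hs.le (by linarith))
        · intro x hx
          exact mul_pos (hs.trans hx.1) (hpos x (hs.le.trans hx.1.le))
        · linarith
      linarith
    have h2 : (∫ t in (0:ℝ)..(s+1), t * h_r t) ≤ ∫ t in Set.Ioi (0:ℝ), t * h_r t := by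
      rw [intervalIntegral.integral_of_le (by linarith : (0:ℝ) ≤ s+1)]
      apply setIntegral_mono_set hint
      · filter_upwards [ae_restrict_mem measurableSet_Ioi] with x hx
        exact (mul_pos hx (hpos x (le_of_lt hx))).le
      · exact (Set.Ioc_subset_Ioi_self).eventuallyLE
    have := h1.trans_le h2
    nlinarith
  -- derivative of r ↦ H_G (√r)
  have hfderiv : ∀ r : ℝ, 0 < r →
      HasDerivAt (fun r => H_G (Real.sqrt r)) (-(1 - P_K (Real.sqrt r)) / (2 * r)) r := by
    intro r hr
    have hsq : HasDerivAt Real.sqrt (1 / (2 * Real.sqrt r)) r :=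
      Real.hasDerivAt_sqrt hr.ne'
    have hsp : 0 < Real.sqrt r := Real.sqrt_pos.2 hr
    have h := (hHG (Real.sqrt r) hsp).comp r hsq
    have hval : -(1 - P_K (Real.sqrt r)) / Real.sqrt r * (1 / (2 * Real.sqrt r))
        = -(1 - P_K (Real.sqrt r)) / (2 * r) := by
      have hms : Real.sqrt r * Real.sqrt r = r := Real.mul_self_sqrt hr.le
      rw [div_mul_div_comm, mul_one,
        show Real.sqrt r * (2 * Real.sqrt r) = 2 * r by rw [mul_left_comm, hms]]
    rwa [hval] at h
  have hfcont : ContinuousOn (fun r => H_G (Real.sqrt r)) (Set.Ioi 0) := by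
    intro x hx
    exact ((hfderiv x hx).differentiableAt.continuousAt).continuousWithinAt
  have hfderiv' : ∀ r : ℝ, 0 < r →
      deriv (fun r => H_G (Real.sqrt r)) r = -(1 - P_K (Real.sqrt r)) / (2 * r) := by
    intro r hr
    exact (hfderiv r hr).deriv
  -- strict antitonicity of r ↦ H_G(√r)
  have hSA : StrictAntiOn (fun r => H_G (Real.sqrt r)) (Set.Ioi 0) := by
    apply strictAntiOn_of_deriv_neg (convex_Ioi 0) hfcont
    intro x hx
    rw [interior_Ioi] at hx
    rw [Set.mem_Ioi] at hx
    rw [hfderiv' x hx]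
    have h1 : P_K (Real.sqrt x) < 1 := hPlt1 _ (Real.sqrt_pos.2 hx)
    have : 0 < (1 - P_K (Real.sqrt x)) / (2 * x) := div_pos (by linarith) (by linarith)
    rw [neg_div]
    linarith
  -- strict monotonicity of the derivative ⇒ strict convexity
  have hDM : StrictMonoOn (deriv (fun r => H_G (Real.sqrt r))) (Set.Ioi 0) := by
    intro a ha b hb hab
    rw [Set.mem_Ioi] at ha hb
    rw [hfderiv' a ha, hfderiv' b hb]
    have hsa : 0 < Real.sqrt a := Real.sqrt_pos.2 ha
    have hPa : P_K (Real.sqrt a) < P_K (Real.sqrt b) :=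
      hPmono _ _ hsa.le (Real.sqrt_lt_sqrt ha.le hab)
    have hPb : P_K (Real.sqrt b) < 1 := hPlt1 _ (Real.sqrt_pos.2 hb)
    rw [neg_div, neg_div, neg_lt_neg_iff,
      div_lt_div_iff₀ (by linarith) (by linarith)]
    nlinarith
  have hSC : StrictConvexOn ℝ (Set.Ioi 0) (fun r => H_G (Real.sqrt r)) := by
    apply StrictMonoOn.strictConvexOn_of_deriv (convex_Ioi 0) hfcont
    rw [interior_Ioi]
    exact hDM
  -- H_P and its derivative
  have hHPfun : H_P = fun r => (1 / 2) * Real.log r + H_G (Real.sqrt r) := funext hHP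
  have hgderiv : ∀ r : ℝ, 0 < r → HasDerivAt H_P (P_K (Real.sqrt r) / (2 * r)) r := by
    intro r hr
    have h1 : HasDerivAt (fun x => (1/2 : ℝ) * Real.log x) (1/2 * r⁻¹) r :=
      (Real.hasDerivAt_log hr.ne').const_mul (1/2)
    have h2 := (h1.add (hfderiv r hr))
    rw [hHPfun]
    refine h2.congr_deriv ?_
    ring
  have hgderiv' : ∀ r : ℝ, 0 < r → deriv H_P r = P_K (Real.sqrt r) / (2 * r) := by
    intro r hr
    exact (hgderiv r hr).deriv
  have hgcont : ContinuousOn H_P (Set.Ioi 0) := by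
    intro x hx
    exact ((hgderiv x hx).differentiableAt.continuousAt).continuousWithinAt
  have hSM : StrictMonoOn H_P (Set.Ioi 0) := by
    apply strictMonoOn_of_deriv_pos (convex_Ioi 0) hgcont
    intro x hx
    rw [interior_Ioi] at hx
    rw [Set.mem_Ioi] at hx
    rw [hgderiv' x hx]
    have := hPpos _ (Real.sqrt_pos.2 hx)
    exact div_pos this (by linarith)
  -- strict antitonicity of deriv H_P
  have hDA : StrictAntiOn (deriv H_P) (Set.Ioi 0) := by
    intro a ha b hb hab
    rw [Set.mem_Ioi] at ha hb
    rw [hgderiv' a ha, hgderiv' b hb]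
    obtain ⟨s₁, hs1def⟩ : ∃ s, s = Real.sqrt a := ⟨_, rfl⟩
    obtain ⟨s₂, hs2def⟩ : ∃ s, s = Real.sqrt b := ⟨_, rfl⟩
    rw [← hs1def, ← hs2def]
    have hs1 : 0 < s₁ := hs1def ▸ Real.sqrt_pos.2 ha
    have hs2 : 0 < s₂ := hs2def ▸ Real.sqrt_pos.2 hb
    have hs12 : s₁ < s₂ := by rw [hs1def, hs2def]; exact Real.sqrt_lt_sqrt ha.le hab
    have hA : s₁ * s₁ = a := by rw [hs1def]; exact Real.mul_self_sqrt ha.le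
    have hB : s₂ * s₂ = b := by rw [hs2def]; exact Real.mul_self_sqrt hb.le
    obtain ⟨I₁, hI1def⟩ : ∃ v, v = ∫ t in (0:ℝ)..s₁, t * h_r t := ⟨_, rfl⟩
    obtain ⟨I₂, hI2def⟩ : ∃ v, v = ∫ t in (0:ℝ)..s₂, t * h_r t := ⟨_, rfl⟩
    obtain ⟨J, hJdef⟩ : ∃ v, v = ∫ t in s₁..s₂, t * h_r t := ⟨_, rfl⟩
    have hsplit : (∫ t in (0:ℝ)..s₁, t * h_r t) + (∫ t in s₁..s₂, t * h_r t)
        = ∫ t in (0:ℝ)..s₂, t * h_r t :=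
      intervalIntegral.integral_add_adjacent_intervals (hII 0 s₁ le_rfl hs1.le)
        (hII s₁ s₂ hs1.le hs2.le)
    have hsplit' : I₁ + J = I₂ := by rw [hI1def, hI2def, hJdef]; exact hsplit
    have hI1pos : 0 < I₁ := by
      have := hPpos s₁ hs1
      rw [hPK] at this
      rw [hI1def]
      nlinarith
    -- J < h_r s₁ * (s₂² - s₁²)/2
    have hJlt : J < h_r s₁ * (s₂^2 - s₁^2) / 2 := by
      have hlt : (∫ t in s₁..s₂, t * h_r t) < ∫ t in s₁..s₂, t * h_r s₁ := by
        apply intervalIntegral.integral_lt_integral_of_continuousOn_of_le_of_exists_lt hs12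
        · exact hcont'.mono (fun x hx => le_trans hs1.le hx.1)
        · exact (continuousOn_id.mul continuousOn_const)
        · intro x hx
          have hhx : h_r x < h_r s₁ := hanti hs1.le (hs1.le.trans hx.1.le) hx.1
          have hx0 : 0 < x := hs1.trans hx.1
          nlinarith
        · refine ⟨s₂, ⟨hs12.le, le_rfl⟩, ?_⟩
          have hhx : h_r s₂ < h_r s₁ := hanti hs1.le hs2.le hs12
          nlinarith
      have heq : (∫ t in s₁..s₂, t * h_r s₁) = h_r s₁ * (s₂^2 - s₁^2) / 2 := by
        rw [intervalIntegral.integral_mul_const, integral_id]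
        ring
      rw [hJdef]
      linarith [heq ▸ hlt]
    -- h_r s₁ * s₁²/2 ≤ I₁
    have hI1ge : h_r s₁ * s₁^2 / 2 ≤ I₁ := by
      have hle : (∫ t in (0:ℝ)..s₁, t * h_r s₁) ≤ ∫ t in (0:ℝ)..s₁, t * h_r t := by
        apply intervalIntegral.integral_mono_on hs1.le
        · exact (continuousOn_id.mul continuousOn_const).intervalIntegrable_of_Icc hs1.le
        · exact hII 0 s₁ le_rfl hs1.le
        · intro x hx
          have hhx : h_r s₁ ≤ h_r x := by
            rcases eq_or_lt_of_le hx.2 with h | h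
            · rw [h]
            · exact (hanti hx.1 hs1.le h).le
          exact mul_le_mul_of_nonneg_left hhx hx.1
      have heq : (∫ t in (0:ℝ)..s₁, t * h_r s₁) = h_r s₁ * s₁^2 / 2 := by
        rw [intervalIntegral.integral_mul_const, integral_id]
        ring
      rw [hI1def]
      linarith [heq ▸ hle]
    have hh1pos : 0 < h_r s₁ := hpos s₁ hs1.le
    -- main inequality: I₂ * s₁² < I₁ * s₂²
    have hmain : I₂ * s₁^2 < I₁ * s₂^2 := by
      nlinarith [sq_nonneg s₁, sq_nonneg (s₂ - s₁), mul_pos hs1 hs2, hsplit']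
    have ha' : a = s₁^2 := by rw [← hA]; ring
    have hb' : b = s₂^2 := by rw [← hB]; ring
    rw [hPK, hPK, ← hI1def, ← hI2def, ha', hb',
      div_lt_div_iff₀ (by nlinarith) (by nlinarith)]
    nlinarith [mul_lt_mul_of_pos_left hmain hπ]
  have hSCC : StrictConcaveOn ℝ (Set.Ioi 0) H_P := by
    apply StrictAntiOn.strictConcaveOn_of_deriv (convex_Ioi 0) hgcont
    rw [interior_Ioi]
    exact hDA
  exact ⟨⟨hSA, hSC⟩, ⟨hSM, hSCC⟩⟩
end
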